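/- arXiv:1912.07303 — 7 statements merged into one kernel-verified Lean document; each statement's English description precedes it below -/
import Mathlib

section
/- Let α ∈ (1,2). There exists a constant c > 0, depending only on α, such that for all integers n₁, n₂, n₃, n with n₁ − n₂ + n₃ − n = 0, n₂ ≠ n₁ and n₂ ≠ n₃, the resonance function Φ := |n₁|^α − |n₂|^α + |n₃|^α − |n|^α is nonzero and satisfies |Φ| ≥ c · |n₁ − n₂| · |n₂ − n₃| · (max(|n₁|,|n₂|,|n₃|,|n|))^{α−2}. -/
open Real Set

private lemma gpos {α M y z : ℝ} (hα₁ : 1 < α) (hα₂ : α < 2) (hM : 0 < M)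
    (hy : 0 ≤ y) (hyz : y ≤ z) (hzM : z ≤ M) :
    (α - 1) * (z - y) * M ^ (α - 2) ≤ |z| ^ (α - 2) * z - |y| ^ (α - 2) * y := by
  rcases eq_or_lt_of_le hyz with rfl | hlt
  · simp
  have hz : 0 < z := lt_of_le_of_lt hy hlt
  have hMγ : 0 < M ^ (α - 2) := Real.rpow_pos_of_pos hM _
  rcases eq_or_lt_of_le hy with rfl | hy0
  · -- y = 0
    have hzγ : M ^ (α - 2) ≤ z ^ (α - 2) :=
      Real.rpow_le_rpow_of_nonpos hz hzM (by linarith)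
    rw [abs_of_pos hz, abs_of_nonneg le_rfl,
      Real.zero_rpow (by linarith : α - 2 ≠ 0)]
    nlinarith [mul_le_mul_of_nonneg_right hzγ hz.le, mul_pos hz hMγ, mul_nonneg (mul_nonneg (by linarith : (0:ℝ) ≤ 2 - α) hz.le) hMγ.le]
  · -- 0 < y < z : MVT on t ↦ t ^ (α - 1)
    obtain ⟨ξ, hξ, hslope⟩ := exists_hasDerivAt_eq_slope (fun t => t ^ (α - 1))
      (fun t => (α - 1) * t ^ (α - 2)) hlt
      (fun t ht => (Real.continuousAt_rpow_const t (α - 1)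
        (Or.inl (by rintro rfl; exact absurd ht.1 (by simpa using hy0.not_ge)))).continuousWithinAt)
      (fun t ht => by
        have htpos : (0:ℝ) < t := lt_trans hy0 ht.1
        have := Real.hasDerivAt_rpow_const (x := t) (p := α - 1) (Or.inl htpos.ne')
        simpa [mul_comm, show α - 1 - 1 = α - 2 by ring] using this)
    have hξ0 : 0 < ξ := lt_trans hy0 hξ.1
    have hξM : ξ ≤ M := le_trans hξ.2.le hzM
    have hξγ : M ^ (α - 2) ≤ ξ ^ (α - 2) :=
      Real.rpow_le_rpow_of_nonpos hξ0 hξM (by linarith)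
    have hdiff : z ^ (α - 1) - y ^ (α - 1) = (α - 1) * ξ ^ (α - 2) * (z - y) := by
      rw [eq_div_iff (sub_ne_zero.2 hlt.ne')] at hslope
      linarith [hslope]
    have h1 : |z| ^ (α - 2) * z = z ^ (α - 1) := by
      rw [abs_of_pos hz, ← Real.rpow_add_one hz.ne']
      ring_nf
    have h2 : |y| ^ (α - 2) * y = y ^ (α - 1) := by
      rw [abs_of_pos hy0, ← Real.rpow_add_one hy0.ne']
      ring_nf
    rw [h1, h2, hdiff]
    have : (α - 1) * M ^ (α - 2) * (z - y) ≤ (α - 1) * ξ ^ (α - 2) * (z - y) := by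
      apply mul_le_mul_of_nonneg_right _ (by linarith)
      exact mul_le_mul_of_nonneg_left hξγ (by linarith)
    linarith

private lemma gA {α M y z : ℝ} (hα₁ : 1 < α) (hα₂ : α < 2) (hM : 0 < M)
    (hyM : |y| ≤ M) (hzM : |z| ≤ M) (hyz : y ≤ z) :
    (α - 1) * (z - y) * M ^ (α - 2) ≤ |z| ^ (α - 2) * z - |y| ^ (α - 2) * y := by
  have hyM' := abs_le.1 hyM
  have hzM' := abs_le.1 hzM
  rcases le_or_gt 0 y with hy | hy
  · exact gpos hα₁ hα₂ hM hy hyz hzM'.2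
  rcases le_or_gt z 0 with hz | hz
  · have h := gpos hα₁ hα₂ hM (by linarith : (0:ℝ) ≤ -z) (by linarith : -z ≤ -y)
      (by linarith : -y ≤ M)
    rw [abs_neg, abs_neg] at h
    have e1 : |(-y)| = |y| := abs_neg y
    nlinarith [h]
  · -- y < 0 < z
    have hMγ : 0 < M ^ (α - 2) := Real.rpow_pos_of_pos hM _
    have hzγ : M ^ (α - 2) ≤ z ^ (α - 2) :=
      Real.rpow_le_rpow_of_nonpos hz hzM'.2 (by linarith)
    have hyγ : M ^ (α - 2) ≤ (-y) ^ (α - 2) :=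
      Real.rpow_le_rpow_of_nonpos (by linarith) (by linarith) (by linarith)
    rw [abs_of_pos hz, abs_of_neg hy]
    nlinarith [mul_le_mul_of_nonneg_right hzγ hz.le,
      mul_le_mul_of_nonneg_right hyγ (by linarith : (0:ℝ) ≤ -y),
      mul_nonneg (mul_nonneg (by linarith : (0:ℝ) ≤ 2 - α) (by linarith : (0:ℝ) ≤ z - y)) hMγ.le]

private lemma core {α M x a b : ℝ} (hα₁ : 1 < α) (hα₂ : α < 2) (hM : 0 < M)
    (ha : 0 < a) (hb : 0 < b) (h1 : |x| ≤ M) (h2 : |x + a| ≤ M)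
    (h3 : |x + b| ≤ M) (h4 : |x + a + b| ≤ M) :
    α * (α - 1) * a * b * M ^ (α - 2) ≤
      |x + a + b| ^ α - |x + a| ^ α - |x + b| ^ α + |x| ^ α := by
  set K : ℝ := α * (α - 1) * b * M ^ (α - 2) with hK
  set h : ℝ → ℝ := fun s => |x + b + s| ^ α - |x + s| ^ α - K * s with hh
  have hder : ∀ s : ℝ, HasDerivAt h
      (α * |x + b + s| ^ (α - 2) * (x + b + s) - α * |x + s| ^ (α - 2) * (x + s) - K) s := by
    intro s
    have d1 : HasDerivAt (fun s : ℝ => |x + b + s| ^ α)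
        (α * |x + b + s| ^ (α - 2) * (x + b + s)) s := by
      have hu : HasDerivAt (fun s : ℝ => x + b + s) 1 s := (hasDerivAt_id s).const_add (x + b)
      have := (hasDerivAt_abs_rpow (x + b + s) hα₁).comp s hu
      simpa [Function.comp_def] using this
    have d2 : HasDerivAt (fun s : ℝ => |x + s| ^ α)
        (α * |x + s| ^ (α - 2) * (x + s)) s := by
      have hu : HasDerivAt (fun s : ℝ => x + s) 1 s := (hasDerivAt_id s).const_add x
      have := (hasDerivAt_abs_rpow (x + s) hα₁).comp s hu
      simpa [Function.comp_def] using this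
    have d3 : HasDerivAt (fun s : ℝ => K * s) K s := by
      simpa using (hasDerivAt_id s).const_mul K
    exact (d1.sub d2).sub d3
  have hx' := abs_le.1 h1
  have hxa' := abs_le.1 h2
  have hxb' := abs_le.1 h3
  have hxab' := abs_le.1 h4
  have hmono : MonotoneOn h (Icc 0 a) := by
    apply monotoneOn_of_deriv_nonneg (convex_Icc 0 a)
    · exact fun s _ => (hder s).differentiableAt.continuousAt.continuousWithinAt
    · exact fun s _ => (hder s).differentiableAt.differentiableWithinAt
    · intro s hs
      rw [interior_Icc] at hs
      rw [(hder s).deriv]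
      have hyb : |x + s| ≤ M := abs_le.2 ⟨by linarith [hs.1, hs.2], by linarith [hs.1, hs.2]⟩
      have hzb : |x + b + s| ≤ M := abs_le.2 ⟨by linarith [hs.1, hs.2], by linarith [hs.1, hs.2]⟩
      have hg := gA hα₁ hα₂ hM hyb hzb (by linarith : x + s ≤ x + b + s)
      have hzy : (x + b + s) - (x + s) = b := by ring
      rw [hzy] at hg
      have := mul_le_mul_of_nonneg_left hg (by linarith : (0:ℝ) ≤ α)
      rw [hK]
      nlinarith [this]
  have hm := hmono (left_mem_Icc.2 ha.le) (right_mem_Icc.2 ha.le) ha.le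
  simp only [hh] at hm
  have e1 : x + b + a = x + a + b := by ring
  rw [e1] at hm
  simp only [add_zero, mul_zero, sub_zero] at hm
  rw [hK] at hm
  nlinarith [hm]

private lemma key' {α M x a b : ℝ} (hα₁ : 1 < α) (hα₂ : α < 2) (hM : 0 < M)
    (ha : a ≠ 0) (hb : b ≠ 0) (h1 : |x| ≤ M) (h2 : |x + a| ≤ M)
    (h3 : |x + b| ≤ M) (h4 : |x + a + b| ≤ M) :
    α * (α - 1) * |a| * |b| * M ^ (α - 2) ≤
      |(|x + a| ^ α - |x| ^ α + |x + b| ^ α - |x + a + b| ^ α)| := by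
  rcases lt_or_gt_of_ne ha with haneg | hapos <;>
    rcases lt_or_gt_of_ne hb with hbneg | hbpos
  · -- a < 0, b < 0 : base point x + a + b
    have hc := core hα₁ hα₂ hM (by linarith : (0:ℝ) < -a) (by linarith : (0:ℝ) < -b)
      h4 (by rw [show x + a + b + -a = x + b by ring]; exact h3)
      (by rw [show x + a + b + -b = x + a by ring]; exact h2)
      (by rw [show x + a + b + -a + -b = x by ring]; exact h1)
    rw [show x + a + b + -a + -b = x by ring, show x + a + b + -a = x + b by ring,
      show x + a + b + -b = x + a by ring] at hc
    rw [abs_of_neg haneg, abs_of_neg hbneg]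
    calc α * (α - 1) * -a * -b * M ^ (α - 2)
        ≤ -(|x + a| ^ α - |x| ^ α + |x + b| ^ α - |x + a + b| ^ α) := by linarith [hc]
      _ ≤ |(|x + a| ^ α - |x| ^ α + |x + b| ^ α - |x + a + b| ^ α)| := neg_le_abs _
  · -- a < 0, b > 0 : base point x + a
    have hc := core hα₁ hα₂ hM (by linarith : (0:ℝ) < -a) hbpos
      h2 (by rw [show x + a + -a = x by ring]; exact h1)
      (by rw [show x + a + b = x + a + b by ring]; exact h4)
      (by rw [show x + a + -a + b = x + b by ring]; exact h3)
    rw [show x + a + -a + b = x + b by ring, show x + a + -a = x by ring] at hc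
    rw [abs_of_neg haneg, abs_of_pos hbpos]
    calc α * (α - 1) * -a * b * M ^ (α - 2)
        ≤ |x + a| ^ α - |x| ^ α + |x + b| ^ α - |x + a + b| ^ α := by linarith [hc]
      _ ≤ |(|x + a| ^ α - |x| ^ α + |x + b| ^ α - |x + a + b| ^ α)| := le_abs_self _
  · -- a > 0, b < 0 : base point x + b
    have hc := core hα₁ hα₂ hM hapos (by linarith : (0:ℝ) < -b)
      h3 (by rw [show x + b + a = x + a + b by ring]; exact h4)
      (by rw [show x + b + -b = x by ring]; exact h1)
      (by rw [show x + b + a + -b = x + a by ring]; exact h2)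
    rw [show x + b + a + -b = x + a by ring, show x + b + a = x + a + b by ring,
      show x + b + -b = x by ring] at hc
    rw [abs_of_pos hapos, abs_of_neg hbneg]
    calc α * (α - 1) * a * -b * M ^ (α - 2)
        ≤ |x + a| ^ α - |x| ^ α + |x + b| ^ α - |x + a + b| ^ α := by linarith [hc]
      _ ≤ |(|x + a| ^ α - |x| ^ α + |x + b| ^ α - |x + a + b| ^ α)| := le_abs_self _
  · -- a > 0, b > 0 : base point x
    have hc := core hα₁ hα₂ hM hapos hbpos h1 h2 h3 h4
    rw [abs_of_pos hapos, abs_of_pos hbpos]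
    calc α * (α - 1) * a * b * M ^ (α - 2)
        ≤ -(|x + a| ^ α - |x| ^ α + |x + b| ^ α - |x + a + b| ^ α) := by linarith [hc]
      _ ≤ |(|x + a| ^ α - |x| ^ α + |x + b| ^ α - |x + a + b| ^ α)| := neg_le_abs _

/-- Resonance function lower bound for the fractional NLS. -/
theorem resonance_lower_bound (α : ℝ) (hα₁ : 1 < α) (hα₂ : α < 2) :
    ∃ c > 0, ∀ n₁ n₂ n₃ n : ℤ, n₁ - n₂ + n₃ - n = 0 → n₂ ≠ n₁ → n₂ ≠ n₃ →
      (|(n₁ : ℝ)| ^ α - |(n₂ : ℝ)| ^ α + |(n₃ : ℝ)| ^ α - |(n : ℝ)| ^ α ≠ 0 ∧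
        c * ((|n₁ - n₂| : ℤ) : ℝ) * ((|n₂ - n₃| : ℤ) : ℝ) *
            ((max (max |n₁| |n₂|) (max |n₃| |n|) : ℤ) : ℝ) ^ (α - 2)
          ≤ |(|(n₁ : ℝ)| ^ α - |(n₂ : ℝ)| ^ α + |(n₃ : ℝ)| ^ α - |(n : ℝ)| ^ α)|) := by
  refine ⟨α * (α - 1), mul_pos (by linarith) (by linarith), ?_⟩
  intro n₁ n₂ n₃ n hsum hne1 hne3
  have hb1 : |n₁| ≤ max (max |n₁| |n₂|) (max |n₃| |n|) :=
    le_trans (le_max_left _ _) (le_max_left _ _)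
  have hb2 : |n₂| ≤ max (max |n₁| |n₂|) (max |n₃| |n|) :=
    le_trans (le_max_right _ _) (le_max_left _ _)
  have hb3 : |n₃| ≤ max (max |n₁| |n₂|) (max |n₃| |n|) :=
    le_trans (le_max_left _ _) (le_max_right _ _)
  have hb4 : |n| ≤ max (max |n₁| |n₂|) (max |n₃| |n|) :=
    le_trans (le_max_right _ _) (le_max_right _ _)
  have hMz1 : (1:ℤ) ≤ max (max |n₁| |n₂|) (max |n₃| |n|) := by
    by_contra hcon
    push_neg at hcon
    have e1 : n₁ = 0 := abs_nonpos_iff.1 (le_trans hb1 (by linarith))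
    have e2 : n₂ = 0 := abs_nonpos_iff.1 (le_trans hb2 (by linarith))
    exact hne1 (e2.trans e1.symm)
  have hM : (0:ℝ) < ((max (max |n₁| |n₂|) (max |n₃| |n|) : ℤ) : ℝ) := by
    exact_mod_cast lt_of_lt_of_le one_pos hMz1
  have hr1 : |(n₁ : ℝ)| ≤ ((max (max |n₁| |n₂|) (max |n₃| |n|) : ℤ) : ℝ) := by
    exact_mod_cast hb1
  have hr2 : |(n₂ : ℝ)| ≤ ((max (max |n₁| |n₂|) (max |n₃| |n|) : ℤ) : ℝ) := by
    exact_mod_cast hb2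
  have hr3 : |(n₃ : ℝ)| ≤ ((max (max |n₁| |n₂|) (max |n₃| |n|) : ℤ) : ℝ) := by
    exact_mod_cast hb3
  have hr4 : |(n : ℝ)| ≤ ((max (max |n₁| |n₂|) (max |n₃| |n|) : ℤ) : ℝ) := by
    exact_mod_cast hb4
  have ha : ((n₁ : ℝ) - n₂) ≠ 0 := by
    intro h
    exact hne1 (by exact_mod_cast (sub_eq_zero.1 h).symm)
  have hb : ((n₃ : ℝ) - n₂) ≠ 0 := by
    intro h
    exact hne3 (by exact_mod_cast (sub_eq_zero.1 h).symm)
  have hkey := key' (M := ((max (max |n₁| |n₂|) (max |n₃| |n|) : ℤ) : ℝ))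
    (x := (n₂ : ℝ)) (a := (n₁ : ℝ) - n₂) (b := (n₃ : ℝ) - n₂) hα₁ hα₂ hM ha hb
    hr2 (by rw [show (n₂:ℝ) + ((n₁:ℝ) - n₂) = (n₁:ℝ) by ring]; exact hr1)
    (by rw [show (n₂:ℝ) + ((n₃:ℝ) - n₂) = (n₃:ℝ) by ring]; exact hr3)
    (by rw [show (n₂:ℝ) + ((n₁:ℝ) - n₂) + ((n₃:ℝ) - n₂) = (n₁:ℝ) + n₃ - n₂ by ring]
        have hnn : n = n₁ + n₃ - n₂ := by omega
        rw [show (n₁:ℝ) + n₃ - n₂ = ((n₁ + n₃ - n₂ : ℤ) : ℝ) by push_cast; ring, ← hnn]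
        exact hr4)
  have hnn : n = n₁ + n₃ - n₂ := by omega
  rw [show (n₂:ℝ) + ((n₁:ℝ) - n₂) + ((n₃:ℝ) - n₂) = ((n₁ + n₃ - n₂ : ℤ) : ℝ) by push_cast; ring,
    ← hnn, show (n₂:ℝ) + ((n₁:ℝ) - n₂) = (n₁:ℝ) by ring,
    show (n₂:ℝ) + ((n₃:ℝ) - n₂) = (n₃:ℝ) by ring] at hkey
  have hc1 : ((|n₁ - n₂| : ℤ) : ℝ) = |(n₁ : ℝ) - n₂| := by push_cast; ring
  have hc2 : ((|n₂ - n₃| : ℤ) : ℝ) = |(n₃ : ℝ) - n₂| := by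
    push_cast
    rw [abs_sub_comm]
  have hpos : 0 < α * (α - 1) * |(n₁ : ℝ) - n₂| * |(n₃ : ℝ) - n₂| *
      ((max (max |n₁| |n₂|) (max |n₃| |n|) : ℤ) : ℝ) ^ (α - 2) := by
    have hγ := Real.rpow_pos_of_pos hM (α - 2)
    have h1 : (0:ℝ) < |(n₁ : ℝ) - n₂| := abs_pos.2 ha
    have h2 : (0:ℝ) < |(n₃ : ℝ) - n₂| := abs_pos.2 hb
    have h3 : (0:ℝ) < α * (α - 1) := mul_pos (by linarith) (by linarith)
    positivity
  refine ⟨?_, ?_⟩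
  · intro h
    rw [h, abs_zero] at hkey
    linarith [hpos, hkey]
  · rw [hc1, hc2]
    exact hkey
end

section
/- Let 1/2 < β ≤ 1 and γ < 2β − 1. There exists C_γ > 0 such that for every a ∈ ℝ, ∑_{n∈ℤ} 1/(⟨n⟩^β ⟨n−a⟩^β) ≤ C_γ / ⟨a⟩^γ. -/
/-- The Japanese bracket `⟨x⟩ = (1 + x²)^(1/2)`. -/
noncomputable def jb (x : ℝ) : ℝ := Real.sqrt (1 + x ^ 2)

lemma jb_one_le (x : ℝ) : 1 ≤ jb x := by
  have := Real.sqrt_le_sqrt (show (1:ℝ) ≤ 1 + x^2 by nlinarith [sq_nonneg x])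
  simpa [jb] using this

lemma jb_pos (x : ℝ) : 0 < jb x := lt_of_lt_of_le one_pos (jb_one_le x)

lemma jb_sq (x : ℝ) : jb x ^ 2 = 1 + x ^ 2 :=
  Real.sq_sqrt (by positivity)

lemma jb_le_two_mul_of_sq {x y : ℝ} (h : 1 + x^2 ≤ 4*(1+y^2)) : jb x ≤ 2 * jb y := by
  have h2 : jb x ≤ Real.sqrt (4*(1+y^2)) := Real.sqrt_le_sqrt h
  have h3 : Real.sqrt (4*(1+y^2)) = 2 * jb y := by
    rw [show (4:ℝ)*(1+y^2) = (2 * jb y)^2 by rw [mul_pow, jb_sq]; ring]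
    exact Real.sqrt_sq (by nlinarith [jb_pos y])
  linarith

lemma jb_le_two_max (x a : ℝ) : jb a ≤ 2 * max (jb x) (jb (x - a)) := by
  have habs : |a| ≤ |x| + |x - a| := by
    calc |a| = |x - (x - a)| := by ring_nf
    _ ≤ |x| + |x - a| := abs_sub _ _
  rcases le_total |x| |x-a| with h | h
  · have h2 : |a| ≤ 2 * |x-a| := by linarith
    have h3 : jb a ≤ 2 * jb (x - a) := jb_le_two_mul_of_sq (by nlinarith [pow_le_pow_left₀ (abs_nonneg a) h2 2, sq_abs a, sq_abs (x-a)])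
    have := le_max_right (jb x) (jb (x-a)); linarith
  · have h2 : |a| ≤ 2 * |x| := by linarith
    have h3 : jb a ≤ 2 * jb x := jb_le_two_mul_of_sq (by nlinarith [pow_le_pow_left₀ (abs_nonneg a) h2 2, sq_abs a, sq_abs x])
    have := le_max_left (jb x) (jb (x-a)); linarith

lemma jb_round (a x : ℝ) : jb (x - (round a : ℝ)) ≤ 2 * jb (x - a) := by
  have hd : |a - (round a : ℝ)| ≤ 1/2 := abs_sub_round a
  have hd2 : (a - (round a : ℝ))^2 ≤ 1/4 := by
    nlinarith [sq_abs (a - (round a : ℝ)), abs_nonneg (a - (round a : ℝ))]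
  apply jb_le_two_mul_of_sq
  nlinarith [sq_nonneg (x - a - (a - (round a : ℝ)))]

lemma jb_int_le (n : ℕ) : ((n:ℝ)+1) ≤ jb ((n:ℝ)+1) := by
  have h : ((n:ℝ)+1) = Real.sqrt (((n:ℝ)+1)^2) := (Real.sqrt_sq (by positivity)).symm
  rw [jb]
  nth_rewrite 1 [h]
  exact Real.sqrt_le_sqrt (by nlinarith)

lemma summable_jb {s : ℝ} (hs : 1 < s) : Summable (fun n : ℤ => 1 / jb (n:ℝ) ^ s) := by
  have hnat : Summable (fun n : ℕ => 1 / jb ((n:ℝ)) ^ s) := by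
    rw [← summable_nat_add_iff 1]
    have hbase : Summable (fun n : ℕ => 1 / ((n:ℝ)+1) ^ s) := by
      have := (summable_nat_add_iff 1).mpr (Real.summable_one_div_nat_rpow.mpr hs)
      simpa using this
    apply hbase.of_nonneg_of_le (fun n => (div_pos one_pos (Real.rpow_pos_of_pos (jb_pos _) s)).le)
    intro n
    apply one_div_le_one_div_of_le (by positivity)
    have h1 : ((n:ℝ)+1) ≤ jb ((n:ℝ)+1) := jb_int_le n
    calc ((n:ℝ)+1) ^ s ≤ jb ((n:ℝ)+1) ^ s := Real.rpow_le_rpow (by positivity) h1 (by linarith)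
      _ = jb (((n+1:ℕ)):ℝ) ^ s := by push_cast; ring_nf
  apply Summable.of_nat_of_neg
  · simpa using hnat
  · have : ∀ n : ℕ, 1 / jb ((-(n:ℤ)):ℝ) ^ s = 1 / jb ((n:ℝ)) ^ s := by
      intro n; rw [show ((-(n:ℤ)):ℝ) = -(n:ℝ) by push_cast; ring, show jb (-(n:ℝ)) = jb (n:ℝ) by simp [jb]]
    exact hnat.congr fun n => by rw [show ((↑(-(n:ℤ)):ℝ)) = -((n:ℕ):ℝ) by push_cast; ring, show jb (-((n:ℕ):ℝ)) = jb ((n:ℕ):ℝ) by simp [jb]]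

lemma key'_s2 (β γ x y z : ℝ) (hγ : 0 ≤ γ) (hγβ : γ ≤ β)
    (hx : 1 ≤ x) (hy : 1 ≤ y) (hz : 1 ≤ z) (hxy : x ≤ y) (hmax : z ≤ 2 * y) :
    1/(x^β * y^β) ≤ 2^γ/z^γ * (1/x^(2*β-γ) + 1/y^(2*β-γ)) := by
  have hx0 : (0:ℝ) < x := by linarith
  have hy0 : (0:ℝ) < y := by linarith
  have hz0 : (0:ℝ) < z := by linarith
  set s := 2*β - γ with hs
  have hxb := Real.rpow_pos_of_pos hx0 β
  have hyb := Real.rpow_pos_of_pos hy0 β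
  have hxs := Real.rpow_pos_of_pos hx0 s
  have hys := Real.rpow_pos_of_pos hy0 s
  have hyg := Real.rpow_pos_of_pos hy0 γ
  have hzg := Real.rpow_pos_of_pos hz0 γ
  have h2g : (0:ℝ) < 2^γ := Real.rpow_pos_of_pos two_pos γ
  have h1 : z^γ ≤ 2^γ * y^γ := by
    rw [← Real.mul_rpow (by norm_num) hy0.le]
    exact Real.rpow_le_rpow hz0.le hmax hγ
  have h2 : x^s * y^γ ≤ x^β * y^β := by
    have e1 : x^s = x^β * x^(β-γ) := by
      rw [← Real.rpow_add hx0, hs]; ring_nf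
    have e2 : x^(β-γ) ≤ y^(β-γ) := Real.rpow_le_rpow hx0.le hxy (by linarith)
    have e3 : y^(β-γ) * y^γ = y^β := by
      rw [← Real.rpow_add hy0]; ring_nf
    have hxbg := Real.rpow_pos_of_pos hx0 (β-γ)
    calc x^s * y^γ = x^β * (x^(β-γ) * y^γ) := by rw [e1]; ring
      _ ≤ x^β * (y^(β-γ) * y^γ) := by
          apply mul_le_mul_of_nonneg_left _ hxb.le
          exact mul_le_mul_of_nonneg_right e2 hyg.le
      _ = x^β * y^β := by rw [e3]
  have h3 : 1/(x^β * y^β) ≤ 1/(x^s * y^γ) :=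
    one_div_le_one_div_of_le (by positivity) h2
  have h4 : 1/(x^s * y^γ) ≤ 2^γ/z^γ * (1/x^s) := by
    rw [div_mul_div_comm, mul_one]
    rw [div_le_div_iff₀ (by positivity) (by positivity)]
    nlinarith
  have h5 : 2^γ/z^γ * (1/x^s) ≤ 2^γ/z^γ * (1/x^s + 1/y^s) := by
    apply mul_le_mul_of_nonneg_left _ (by positivity)
    linarith [(one_div_pos.mpr hys).le]
  linarith

lemma key (β γ x y z : ℝ) (hγ : 0 ≤ γ) (hγβ : γ ≤ β)
    (hx : 1 ≤ x) (hy : 1 ≤ y) (hz : 1 ≤ z) (hmax : z ≤ 2 * max x y) :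
    1/(x^β * y^β) ≤ 2^γ/z^γ * (1/x^(2*β-γ) + 1/y^(2*β-γ)) := by
  rcases le_total x y with h | h
  · rw [max_eq_right h] at hmax
    exact key'_s2 β γ x y z hγ hγβ hx hy hz h hmax
  · rw [max_eq_left h] at hmax
    have := key'_s2 β γ y x z hγ hγβ hy hx hz h hmax
    calc 1/(x^β * y^β) = 1/(y^β * x^β) := by ring_nf
      _ ≤ 2^γ/z^γ * (1/y^(2*β-γ) + 1/x^(2*β-γ)) := this
      _ = 2^γ/z^γ * (1/x^(2*β-γ) + 1/y^(2*β-γ)) := by ring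

/-- Discrete convolution estimate with Japanese brackets. -/
theorem sum_bracket_estimate (β γ : ℝ) (hβ₁ : 1 / 2 < β) (hβ₂ : β ≤ 1) (hγ : γ < 2 * β - 1) :
    ∃ C > 0, ∀ a : ℝ,
      (∑' n : ℤ, ENNReal.ofReal (1 / (jb (n : ℝ) ^ β * jb ((n : ℝ) - a) ^ β)))
        ≤ ENNReal.ofReal (C / jb a ^ γ) := by
  set γ' := max γ 0 with hγ'def
  have hγ'0 : 0 ≤ γ' := le_max_right _ _
  have hγγ' : γ ≤ γ' := le_max_left _ _
  have hγ'lt : γ' < 2 * β - 1 := max_lt hγ (by linarith)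
  have hγ'β : γ' ≤ β := by linarith
  set s := 2 * β - γ' with hsdef
  have hs1 : 1 < s := by simp only [hsdef]; linarith
  have hsum := summable_jb hs1
  have hterm_nonneg : ∀ n : ℤ, 0 ≤ 1 / jb (n:ℝ) ^ s :=
    fun n => (div_pos one_pos (Real.rpow_pos_of_pos (jb_pos _) s)).le
  set K := ∑' n : ℤ, 1 / jb (n:ℝ) ^ s with hKdef
  have hK0 : 0 < K := by
    apply Summable.tsum_pos hsum hterm_nonneg 0
    have : jb ((0:ℤ):ℝ) = 1 := by simp [jb]
    rw [this, Real.one_rpow]; norm_num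
  have h2g : (0:ℝ) < 2^γ' := Real.rpow_pos_of_pos two_pos γ'
  have h2s : (0:ℝ) < 2^s := Real.rpow_pos_of_pos two_pos s
  refine ⟨2^γ' * ((1 + 2^s) * K), by positivity, fun a => ?_⟩
  have hja := jb_pos a
  have hja1 := jb_one_le a
  have hjag : (0:ℝ) < jb a ^ γ' := Real.rpow_pos_of_pos hja γ'
  -- the ENNReal sum over shifted bracket
  have hA : (∑' n : ℤ, ENNReal.ofReal (1 / jb (n:ℝ) ^ s)) = ENNReal.ofReal K :=
    (ENNReal.ofReal_tsum_of_nonneg hterm_nonneg hsum).symm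
  set m : ℤ := round a with hmdef
  have hB : (∑' n : ℤ, ENNReal.ofReal (1 / jb ((n:ℝ) - a) ^ s))
      ≤ ENNReal.ofReal (2^s * K) := by
    have hpt : ∀ n : ℤ, ENNReal.ofReal (1 / jb ((n:ℝ) - a) ^ s)
        ≤ ENNReal.ofReal (2^s * (1 / jb (((n - m : ℤ)):ℝ) ^ s)) := by
      intro n
      apply ENNReal.ofReal_le_ofReal
      have hr : jb (((n - m : ℤ)):ℝ) ≤ 2 * jb ((n:ℝ) - a) := by
        have := jb_round a (n:ℝ)
        have hc : (((n - m : ℤ)):ℝ) = (n:ℝ) - (m:ℝ) := by push_cast; ring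
        rw [hc]; exact this
      have hrp : jb (((n - m : ℤ)):ℝ) ^ s ≤ 2^s * jb ((n:ℝ) - a) ^ s := by
        calc jb (((n - m : ℤ)):ℝ) ^ s ≤ (2 * jb ((n:ℝ) - a)) ^ s :=
              Real.rpow_le_rpow (jb_pos _).le hr (by linarith)
          _ = 2^s * jb ((n:ℝ) - a) ^ s := Real.mul_rpow (by norm_num) (jb_pos _).le
      rw [mul_one_div, div_le_div_iff₀ (Real.rpow_pos_of_pos (jb_pos _) s)
        (Real.rpow_pos_of_pos (jb_pos _) s), one_mul]
      linarith
    calc (∑' n : ℤ, ENNReal.ofReal (1 / jb ((n:ℝ) - a) ^ s))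
        ≤ ∑' n : ℤ, ENNReal.ofReal (2^s * (1 / jb (((n - m : ℤ)):ℝ) ^ s)) :=
          ENNReal.tsum_le_tsum hpt
      _ = ∑' n : ℤ, ENNReal.ofReal (2^s * (1 / jb ((n:ℝ)) ^ s)) := by
          exact (Equiv.subRight m).tsum_eq (fun k : ℤ => ENNReal.ofReal (2^s * (1 / jb ((k:ℝ)) ^ s)))
      _ = ENNReal.ofReal (2^s * K) := by
          rw [← ENNReal.ofReal_tsum_of_nonneg (fun n => mul_nonneg h2s.le (hterm_nonneg n))
            (hsum.mul_left _)]
          congr 1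
          rw [tsum_mul_left]
  -- main pointwise bound
  have hmain : ∀ n : ℤ, ENNReal.ofReal (1 / (jb (n:ℝ) ^ β * jb ((n:ℝ) - a) ^ β))
      ≤ ENNReal.ofReal (2^γ'/jb a^γ') * (ENNReal.ofReal (1 / jb (n:ℝ) ^ s)
        + ENNReal.ofReal (1 / jb ((n:ℝ) - a) ^ s)) := by
    intro n
    rw [← ENNReal.ofReal_add (hterm_nonneg n) (div_pos one_pos (Real.rpow_pos_of_pos (jb_pos _) s)).le,
      ← ENNReal.ofReal_mul (div_pos h2g hjag).le]
    apply ENNReal.ofReal_le_ofReal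
    exact key β γ' (jb (n:ℝ)) (jb ((n:ℝ) - a)) (jb a) hγ'0 hγ'β
      (jb_one_le _) (jb_one_le _) hja1 (jb_le_two_max (n:ℝ) a)
  calc (∑' n : ℤ, ENNReal.ofReal (1 / (jb (n:ℝ) ^ β * jb ((n:ℝ) - a) ^ β)))
      ≤ ∑' n : ℤ, ENNReal.ofReal (2^γ'/jb a^γ') * (ENNReal.ofReal (1 / jb (n:ℝ) ^ s)
        + ENNReal.ofReal (1 / jb ((n:ℝ) - a) ^ s)) := ENNReal.tsum_le_tsum hmain
    _ = ENNReal.ofReal (2^γ'/jb a^γ') * ((∑' n : ℤ, ENNReal.ofReal (1 / jb (n:ℝ) ^ s))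
        + ∑' n : ℤ, ENNReal.ofReal (1 / jb ((n:ℝ) - a) ^ s)) := by
        rw [ENNReal.tsum_mul_left, ENNReal.tsum_add]
    _ ≤ ENNReal.ofReal (2^γ'/jb a^γ') * (ENNReal.ofReal K + ENNReal.ofReal (2^s * K)) := by
        apply mul_le_mul_right ; rw [hA]; exact add_le_add_right hB _
    _ = ENNReal.ofReal (2^γ'/jb a^γ' * ((1 + 2^s) * K)) := by
        rw [← ENNReal.ofReal_add hK0.le (mul_nonneg h2s.le hK0.le),
          ← ENNReal.ofReal_mul (div_pos h2g hjag).le]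
        congr 1; ring
    _ ≤ ENNReal.ofReal ((2^γ' * ((1 + 2^s) * K)) / jb a ^ γ) := by
        apply ENNReal.ofReal_le_ofReal
        have hrg : jb a ^ γ ≤ jb a ^ γ' := Real.rpow_le_rpow_of_exponent_le hja1 hγγ'
        have hrgpos : (0:ℝ) < jb a ^ γ := Real.rpow_pos_of_pos hja γ
        rw [div_mul_eq_mul_div]
        apply div_le_div_of_nonneg_left ?_ hrgpos ?_ |>.trans_eq ?_
        · positivity
        · exact hrg
        · rfl
end

section
/- Let J ⊆ ℝ be an interval, I ⊆ ℝ a bounded interval of length |I|, and φ : ℝ → ℝ a continuously differentiable function such that |φ'(ξ)| ≥ m for all ξ ∈ J, for some m > 0. Then the set {k ∈ ℤ : k ∈ J and φ(k) ∈ I} is finite and its cardinality is at most 1 + |I|/m. -/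
/-- Counting lemma: integers in an interval `J` whose image under a `C¹` function `φ`
with `|φ'| ≥ m` on `J` lies in a bounded interval `I` form a finite set of
cardinality at most `1 + |I| / m`. -/
theorem counting_lemma (J I : Set ℝ) (hJ : J.OrdConnected) (hI : I.OrdConnected)
    (hIbdd : Bornology.IsBounded I) (φ : ℝ → ℝ) (hφ : ContDiff ℝ 1 φ)
    (m : ℝ) (hm : 0 < m) (hφ' : ∀ ξ ∈ J, m ≤ |deriv φ ξ|) :
    {k : ℤ | (k : ℝ) ∈ J ∧ φ (k : ℝ) ∈ I}.Finite ∧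
      (({k : ℤ | (k : ℝ) ∈ J ∧ φ (k : ℝ) ∈ I}.ncard : ℝ) ≤ 1 + Metric.diam I / m) := by
  set S := {k : ℤ | (k : ℝ) ∈ J ∧ φ (k : ℝ) ∈ I} with hS
  set D := Metric.diam I / m with hD
  have hD0 : 0 ≤ D := div_nonneg Metric.diam_nonneg hm.le
  have key : ∀ a ∈ S, ∀ b ∈ S, a ≤ b → (b : ℝ) - a ≤ D := by
    intro a ha b hb hab
    rcases eq_or_lt_of_le hab with rfl | hlt
    · simpa using hD0
    have hltR : (a : ℝ) < b := by exact_mod_cast hlt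
    obtain ⟨c, hc, hc'⟩ := exists_hasDerivAt_eq_slope φ (deriv φ) hltR
      (hφ.continuous.continuousOn)
      (fun x _ => ((hφ.differentiable one_ne_zero) x).hasDerivAt)
    have hcJ : c ∈ J := hJ.out ha.1 hb.1 ⟨hc.1.le, hc.2.le⟩
    have h1 : m ≤ |deriv φ c| := hφ' c hcJ
    have h2 : |φ b - φ a| ≤ Metric.diam I := by
      have := Metric.dist_le_diam_of_mem hIbdd hb.2 ha.2
      rwa [Real.dist_eq] at this
    have hba : (0:ℝ) < (b:ℝ) - a := sub_pos.2 hltR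
    have h3 : m * ((b:ℝ) - a) ≤ Metric.diam I := by
      calc m * ((b:ℝ) - a) ≤ |deriv φ c| * ((b:ℝ) - a) := by nlinarith
        _ = |deriv φ c * ((b:ℝ) - a)| := by rw [abs_mul, abs_of_pos hba]
        _ = |φ b - φ a| := by
            rw [hc']
            congr 1
            field_simp
        _ ≤ Metric.diam I := h2
    rw [hD, le_div_iff₀ hm]
    linarith [h3]
  rcases S.eq_empty_or_nonempty with hSe | ⟨a, ha⟩
  · rw [hSe]
    simp [hD0]
    linarith
  have hflnn : (0:ℤ) ≤ ⌊D⌋ := Int.le_floor.2 (by simpa using hD0)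
  have hsub : S ⊆ Set.Icc (a - ⌊D⌋) (a + ⌊D⌋) := by
    intro b hb
    rcases le_total a b with h | h
    · have := key a ha b hb h
      have hb' : b - a ≤ ⌊D⌋ := Int.le_floor.2 (by push_cast; linarith)
      constructor <;> omega
    · have := key b hb a ha h
      have hb' : a - b ≤ ⌊D⌋ := Int.le_floor.2 (by push_cast; linarith)
      constructor <;> omega
  have hfin : S.Finite := (Set.finite_Icc _ _).subset hsub
  refine ⟨hfin, ?_⟩
  obtain ⟨a₀, ha₀S, ha₀min⟩ : ∃ a₀ ∈ S, ∀ b ∈ S, id b ≤ id a₀ → id a₀ = id b := by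
    obtain ⟨i, hi, hmin⟩ := hfin.exists_minimalFor id S ⟨a, ha⟩
    exact ⟨i, hi, fun b hb h => le_antisymm (hmin hb h) h⟩
  have hsub' : S ⊆ Set.Icc a₀ (a₀ + ⌊D⌋) := by
    intro b hb
    constructor
    · by_contra h
      push_neg at h
      exact absurd (ha₀min b hb h.le).symm h.ne
    · have := key a₀ ha₀S b hb ?_
      · have : b - a₀ ≤ ⌊D⌋ := Int.le_floor.2 (by push_cast; linarith)
        omega
      · by_contra h
        push_neg at h
        exact absurd (ha₀min b hb h.le).symm h.ne
  have hcard : S.ncard ≤ (Set.Icc a₀ (a₀ + ⌊D⌋)).ncard :=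
    Set.ncard_le_ncard hsub' (Set.finite_Icc _ _)
  have hIcc : (Set.Icc a₀ (a₀ + ⌊D⌋)).ncard = (⌊D⌋ + 1).toNat := by
    rw [← Finset.coe_Icc, Set.ncard_coe_finset, Int.card_Icc]
    congr 1
    ring
  have hfl0 : (0:ℤ) ≤ ⌊D⌋ := Int.le_floor.2 (by simpa using hD0)
  have : (S.ncard : ℝ) ≤ ((⌊D⌋ + 1).toNat : ℝ) := by exact_mod_cast hIcc ▸ hcard
  have h5 : ((⌊D⌋ + 1).toNat : ℝ) = (⌊D⌋ : ℝ) + 1 := by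
    have : ((⌊D⌋ + 1).toNat : ℤ) = ⌊D⌋ + 1 := Int.toNat_of_nonneg (by omega)
    exact_mod_cast congrArg (fun z : ℤ => (z : ℝ)) this
  have h6 : (⌊D⌋ : ℝ) ≤ D := Int.floor_le D
  linarith
end

section
/- Let 1 < α < 2. There exists C > 0, depending only on α, such that for all a ∈ ℤ, l ∈ ℝ, r ≥ 1/100 and all real N₁, N₂ ≥ 1, the set A_{a,l,N₁,N₂}(r) := {k ∈ ℤ : N₁ ≤ |k| ≤ 2N₁, N₂ ≤ |a−k| ≤ 2N₂, and | |k|^α + |a−k|^α − l | ≤ r} is finite with cardinality at most C · min(N₁,N₂)^{1−α/2} · r^{1/2}. -/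
open Set Real

lemma convex_strong_rpow (α : ℝ) (hα₁ : 1 < α) (hα₂ : α < 2) (N : ℝ) (hN : 0 < N) :
    ConvexOn ℝ (Set.Icc N (2*N))
      (fun x : ℝ => x ^ α - α*(α-1)*(2*N)^(α-2)/2 * x^2) := by
  set c : ℝ := α*(α-1)*(2*N)^(α-2) with hc
  have hcpos : 0 < c := by
    apply mul_pos (mul_pos (by linarith) (by linarith))
    exact Real.rpow_pos_of_pos (by linarith) _
  have hint : interior (Set.Icc N (2*N)) = Set.Ioo N (2*N) := interior_Icc
  apply convexOn_of_hasDerivWithinAt2_nonneg (f' := fun x => α * x ^ (α-1) - c * x)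
    (f'' := fun x => α * ((α-1) * x ^ (α-2)) - c)
    (convex_Icc _ _)
  · apply ContinuousOn.sub
    · exact fun x hx => (Real.continuousAt_rpow_const x α (Or.inl (by nlinarith [hx.1]))).continuousWithinAt
    · exact (continuous_const.mul (continuous_pow 2)).continuousOn
  · intro x hx
    rw [hint] at hx
    have hx0 : x ≠ 0 := by nlinarith [hx.1]
    have h1 : HasDerivAt (fun y : ℝ => y ^ α) (α * x ^ (α-1)) x :=
      Real.hasDerivAt_rpow_const (Or.inl hx0)
    have h2 : HasDerivAt (fun y : ℝ => c/2 * y^2) (c/2 * (2 * x^1)) x :=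
      (hasDerivAt_pow 2 x).const_mul (c/2)
    have := (h1.sub h2).hasDerivWithinAt (s := interior (Set.Icc N (2*N)))
    exact this.congr_deriv (by beta_reduce; ring)
  · intro x hx
    rw [hint] at hx
    have hx0 : x ≠ 0 := by nlinarith [hx.1]
    have h1 : HasDerivAt (fun y : ℝ => y ^ (α-1)) ((α-1) * x ^ (α-1-1)) x :=
      Real.hasDerivAt_rpow_const (Or.inl hx0)
    have h2 : HasDerivAt (fun y : ℝ => α * y ^ (α-1) - c * y)
        (α * ((α-1) * x ^ (α-1-1)) - c * 1) x :=
      (h1.const_mul α).sub ((hasDerivAt_id x).const_mul c)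
    have := h2.hasDerivWithinAt (s := interior (Set.Icc N (2*N)))
    exact this.congr_deriv (by beta_reduce; rw [show α - 1 - 1 = α - 2 by ring]; ring)
  · intro x hx
    rw [hint] at hx
    have hxpos : 0 < x := by nlinarith [hx.1]
    have hkey : (2*N) ^ (α-2) ≤ x ^ (α-2) :=
      Real.rpow_le_rpow_of_nonpos hxpos hx.2.le (by linarith)
    have : c ≤ α * ((α-1) * x ^ (α-2)) := by
      rw [hc]
      have := mul_le_mul_of_nonneg_left hkey (by nlinarith : (0:ℝ) ≤ α*(α-1))
      nlinarith
    linarith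


lemma convexOn_comp_const_sub {f : ℝ → ℝ} {s : Set ℝ} (hf : ConvexOn ℝ s f) (a : ℝ) :
    ConvexOn ℝ {x : ℝ | a - x ∈ s} (fun x => f (a - x)) := by
  constructor
  · intro x hx y hy p q hp hq hpq
    simp only [mem_setOf_eq, smul_eq_mul] at *
    have : a - (p * x + q * y) = p * (a - x) + q * (a - y) := by
      have : a = p * a + q * a := by rw [← add_mul, hpq, one_mul]
      linarith
    rw [this]
    exact hf.1 hx hy hp hq hpq
  · intro x hx y hy p q hp hq hpq
    simp only [mem_setOf_eq, smul_eq_mul] at *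
    have heq : a - (p * x + q * y) = p * (a - x) + q * (a - y) := by
      have : a = p * a + q * a := by rw [← add_mul, hpq, one_mul]
      linarith
    rw [heq]
    have := hf.2 hx hy hp hq hpq
    simpa using this

lemma convexOn_comp_sub_const {f : ℝ → ℝ} {s : Set ℝ} (hf : ConvexOn ℝ s f) (a : ℝ) :
    ConvexOn ℝ {x : ℝ | x - a ∈ s} (fun x => f (x - a)) := by
  constructor
  · intro x hx y hy p q hp hq hpq
    simp only [mem_setOf_eq, smul_eq_mul] at *
    have : p * x + q * y - a = p * (x - a) + q * (y - a) := by
      have : a = p * a + q * a := by rw [← add_mul, hpq, one_mul]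
      linarith
    rw [this]
    exact hf.1 hx hy hp hq hpq
  · intro x hx y hy p q hp hq hpq
    simp only [mem_setOf_eq, smul_eq_mul] at *
    have heq : p * x + q * y - a = p * (x - a) + q * (y - a) := by
      have : a = p * a + q * a := by rw [← add_mul, hpq, one_mul]
      linarith
    rw [heq]
    have := hf.2 hx hy hp hq hpq
    simpa using this

lemma convexOn_comp_neg {f : ℝ → ℝ} {s : Set ℝ} (hf : ConvexOn ℝ s f) :
    ConvexOn ℝ {x : ℝ | -x ∈ s} (fun x => f (-x)) := by
  have := convexOn_comp_const_sub hf 0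
  simpa using this

lemma convexOn_affine {f : ℝ → ℝ} (p q : ℝ) (hf : ∀ x, f x = p * x + q)
    {s : Set ℝ} (hs : Convex ℝ s) : ConvexOn ℝ s f := by
  constructor
  · exact hs
  · intro x _ y _ u v hu hv huv
    simp only [smul_eq_mul, hf]
    have : q = u * q + v * q := by rw [← add_mul, huv, one_mul]
    nlinarith [this]

lemma key_product_bound {f : ℝ → ℝ} {c : ℝ} (hc : 0 < c) {I : Set ℝ}
    (hcv : ConvexOn ℝ I (fun x => f x - c/2 * x^2))
    {s m t l r : ℝ} (hs : s ∈ I) (hm : m ∈ I) (ht : t ∈ I)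
    (hsm : s ≤ m) (hmt : m ≤ t)
    (hfs : |f s - l| ≤ r) (hfm : |f m - l| ≤ r) (hft : |f t - l| ≤ r) :
    (m - s) * (t - m) ≤ 4 * r / c := by
  have hr : 0 ≤ r := le_trans (abs_nonneg _) hfm
  rcases eq_or_lt_of_le (hsm.trans hmt) with h | hst
  · have h1 : m = s := le_antisymm (h ▸ hmt) hsm
    rw [h1]
    simp
    positivity
  · set d : ℝ := t - s with hd
    have hdpos : 0 < d := by simp [hd]; linarith
    set p : ℝ := (t - m) / d with hp
    set q : ℝ := (m - s) / d with hq
    have hp0 : 0 ≤ p := div_nonneg (by linarith) hdpos.le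
    have hq0 : 0 ≤ q := div_nonneg (by linarith) hdpos.le
    have hpq : p + q = 1 := by rw [hp, hq, ← add_div, div_eq_one_iff_eq hdpos.ne', hd]; ring
    have hcomb : p • s + q • t = m := by
      simp only [smul_eq_mul, hp, hq]
      field_simp
      ring
    have hjen := hcv.2 hs ht hp0 hq0 hpq
    rw [hcomb] at hjen
    simp only [smul_eq_mul] at hjen
    -- f m - c/2 m² ≤ p (f s - c/2 s²) + q (f t - c/2 t²)
    have hid : p * s^2 + q * t^2 - m^2 = (m - s) * (t - m) := by
      have hm' : m = p * s + q * t := by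
        simp only [hp, hq]; field_simp; ring
      rw [hm']
      rw [show q = 1 - p by linarith]
      ring
    have h1 : f m ≤ p * f s + q * f t - c/2 * ((m - s) * (t - m)) := by
      nlinarith [hjen, hid]
    have habs_s : f s ≤ l + r := by cases abs_le.mp hfs; linarith
    have habs_t : f t ≤ l + r := by cases abs_le.mp hft; linarith
    have habs_m : l - r ≤ f m := by cases abs_le.mp hfm; linarith
    have hlr : p * (l + r) + q * (l + r) = l + r := by
      rw [← add_mul, hpq, one_mul]
    have h2 : c/2 * ((m - s) * (t - m)) ≤ 2 * r := by
      nlinarith [mul_le_mul_of_nonneg_left habs_s hp0,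
        mul_le_mul_of_nonneg_left habs_t hq0, hlr]
    rw [le_div_iff₀ hc]
    linarith [h2]


lemma count_interval_pair (S : Set ℤ) (hfin : S.Finite) (D : ℝ) (hD : 0 ≤ D)
    (s t : ℤ)
    (h : ∀ m ∈ S, s ≤ m ∧ m ≤ t ∧ ((m : ℝ) - s) * ((t : ℝ) - m) ≤ D) :
    (S.ncard : ℝ) ≤ 2 * (Real.sqrt D + 1) := by
  set q : ℤ := ⌊Real.sqrt D⌋ with hq
  have hq0 : 0 ≤ q := Int.floor_nonneg.mpr (Real.sqrt_nonneg D)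
  have hsub : S ⊆ Set.Icc s (s + q) ∪ Set.Icc (t - q) t := by
    intro m hm
    obtain ⟨h1, h2, h3⟩ := h m hm
    by_cases hcase : (m : ℝ) - s ≤ Real.sqrt D
    · left
      refine ⟨h1, ?_⟩
      have : (m : ℤ) - s ≤ q := Int.le_floor.mpr (by push_cast; linarith)
      omega
    · right
      refine ⟨?_, h2⟩
      push_neg at hcase
      have ht : (t : ℝ) - m ≤ Real.sqrt D := by
        by_contra hcon
        push_neg at hcon
        nlinarith [Real.sq_sqrt hD, Real.sqrt_nonneg D]
      have : (t : ℤ) - m ≤ q := Int.le_floor.mpr (by push_cast; linarith)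
      omega
  have hcard : S.ncard ≤ (Set.Icc s (s + q)).ncard + (Set.Icc (t - q) t).ncard :=
    le_trans (Set.ncard_le_ncard hsub ((Set.finite_Icc _ _).union (Set.finite_Icc _ _)))
      (Set.ncard_union_le _ _)
  have hicc : ∀ u v : ℤ, u ≤ v → (Set.Icc u v).ncard = (v + 1 - u).toNat := by
    intro u v _
    rw [← Finset.coe_Icc, Set.ncard_coe_finset, Int.card_Icc]
  have h1 : (Set.Icc s (s + q)).ncard = q.toNat + 1 := by
    rw [hicc s (s + q) (by omega)]; omega
  have h2 : (Set.Icc (t - q) t).ncard = q.toNat + 1 := by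
    rw [hicc (t - q) t (by omega)]; omega
  have hfloor : (q.toNat : ℝ) ≤ Real.sqrt D := by
    have h5 := Int.floor_le (Real.sqrt D)
    rw [← hq] at h5
    have h6 : ((q.toNat : ℤ) : ℝ) = (q : ℝ) := by
      rw [Int.toNat_of_nonneg hq0]
    push_cast at h6 ⊢
    linarith
  have hfin2 : (S.ncard : ℝ) ≤ (q.toNat : ℝ) + 1 + ((q.toNat : ℝ) + 1) := by
    have : (S.ncard : ℕ) ≤ (q.toNat + 1) + (q.toNat + 1) := by omega
    exact_mod_cast this
  linarith

lemma region_count {f : ℝ → ℝ} {c : ℝ} (hc : 0 < c) {I : Set ℝ}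
    (hcv : ConvexOn ℝ I (fun x => f x - c/2 * x^2))
    (S : Set ℤ) (hfin : S.Finite) (hSI : ∀ k ∈ S, (k : ℝ) ∈ I)
    (l r : ℝ) (hr : 0 ≤ r) (hS : ∀ k ∈ S, |f k - l| ≤ r) :
    (S.ncard : ℝ) ≤ 2 * (Real.sqrt (4 * r / c) + 1) := by
  rcases S.eq_empty_or_nonempty with hS0 | hS0
  · rw [hS0]
    simp
    positivity
  · have hne : hfin.toFinset.Nonempty := by
      rwa [Set.Finite.toFinset_nonempty]
    set s : ℤ := hfin.toFinset.min' hne with hsdef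
    set t : ℤ := hfin.toFinset.max' hne with htdef
    have hsS : s ∈ S := by
      have := hfin.toFinset.min'_mem hne
      rwa [Set.Finite.mem_toFinset] at this
    have htS : t ∈ S := by
      have := hfin.toFinset.max'_mem hne
      rwa [Set.Finite.mem_toFinset] at this
    apply count_interval_pair S hfin _ (by positivity) s t
    intro m hm
    have hsm : s ≤ m := hfin.toFinset.min'_le m (hfin.mem_toFinset.mpr hm)
    have hmt : m ≤ t := hfin.toFinset.le_max' m (hfin.mem_toFinset.mpr hm)
    refine ⟨hsm, hmt, ?_⟩
    exact key_product_bound hc hcv (hSI s hsS) (hSI m hm) (hSI t htS)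
      (by exact_mod_cast hsm) (by exact_mod_cast hmt)
      (hS s hsS) (hS m hm) (hS t htS)



lemma region_convex {g₁ g₂ : ℝ → ℝ} {I₁ I₂ : Set ℝ} {c₁ c₂ : ℝ} (a : ℝ)
    (h1 : ConvexOn ℝ I₁ (fun x => g₁ x - c₁/2 * x^2))
    (h2 : ConvexOn ℝ I₂ (fun x => g₂ x - c₂/2 * (a - x)^2)) :
    ConvexOn ℝ (I₁ ∩ I₂) (fun x => (g₁ x + g₂ x) - (c₁+c₂)/2 * x^2) := by
  have hI : Convex ℝ (I₁ ∩ I₂) := h1.1.inter h2.1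
  have hA : ConvexOn ℝ (I₁ ∩ I₂) (fun x => c₂/2 * (a - x)^2 - c₂/2 * x^2) :=
    convexOn_affine (-(c₂ * a)) (c₂/2 * a^2) (fun x => by ring) hI
  have hsum := ((h1.subset Set.inter_subset_left hI).add
    (h2.subset Set.inter_subset_right hI)).add hA
  refine Eq.mpr (congrArg (ConvexOn ℝ (I₁ ∩ I₂)) ?_) hsum
  funext x
  simp only [Pi.add_apply]
  ring

lemma final_arith (α : ℝ) (hα₁ : 1 < α) (hα₂ : α < 2) (r N₁ N₂ : ℝ)
    (hr : 1/100 ≤ r) (hN₁ : 1 ≤ N₁) (hN₂ : 1 ≤ N₂) :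
    8 * (Real.sqrt (4*r/(α*(α-1)*(2*N₁)^(α-2) + α*(α-1)*(2*N₂)^(α-2))) + 1)
      ≤ (32 / Real.sqrt (α*(α-1)) + 80) * (min N₁ N₂) ^ (1 - α/2) * r ^ ((1:ℝ)/2) := by
  set v : ℝ := α*(α-1) with hv
  have hvpos : 0 < v := by nlinarith
  set M : ℝ := min N₁ N₂ with hM
  have hM1 : 1 ≤ M := le_min hN₁ hN₂
  have hMpos : 0 < M := by linarith
  have hrpos : 0 < r := by linarith
  set c : ℝ := v*(2*N₁)^(α-2) + v*(2*N₂)^(α-2) with hc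
  have hcpos : 0 < c := by
    have := Real.rpow_pos_of_pos (show (0:ℝ) < 2*N₁ by linarith) (α-2)
    have := Real.rpow_pos_of_pos (show (0:ℝ) < 2*N₂ by linarith) (α-2)
    positivity
  have hc0 : v*(2*M)^(α-2) ≤ c := by
    rcases min_le_iff.mp (le_refl M) with h | h
    all_goals {
      rw [hc]
      rcases min_cases N₁ N₂ with ⟨hEq, _⟩ | ⟨hEq, _⟩ <;> rw [hM, hEq] <;>
      · have t1 : 0 < v*(2*N₁)^(α-2) := by positivity
        have t2 : 0 < v*(2*N₂)^(α-2) := by positivity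
        linarith }
  set u : ℝ := M ^ (1 - α/2) * r ^ ((1:ℝ)/2) with hu
  have hu1 : 1 ≤ M ^ (1 - α/2) := Real.one_le_rpow hM1 (by linarith)
  have hu2 : (1:ℝ)/10 ≤ r ^ ((1:ℝ)/2) := by
    have h100 : ((1:ℝ)/100) ^ ((1:ℝ)/2) = 1/10 := by
      rw [show (1:ℝ)/100 = ((1:ℝ)/10)^(2:ℕ) by norm_num,
        ← Real.rpow_natCast ((1:ℝ)/10) 2, ← Real.rpow_mul (by norm_num)]
      norm_num
    calc (1:ℝ)/10 = ((1:ℝ)/100) ^ ((1:ℝ)/2) := h100.symm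
      _ ≤ r ^ ((1:ℝ)/2) := Real.rpow_le_rpow (by norm_num) hr (by norm_num)
  have huge : (1:ℝ)/10 ≤ u := by
    rw [hu]
    nlinarith [Real.rpow_nonneg hrpos.le ((1:ℝ)/2)]
  set K : ℝ := 4 / Real.sqrt v with hK
  have hKpos : 0 < K := by
    have := Real.sqrt_pos.mpr hvpos
    positivity
  have claim1 : Real.sqrt (4*r/c) ≤ K * u := by
    have hKu : 0 ≤ K * u := by positivity
    have hsq : (K * u)^2 = 16/v * (M ^ (2-α) * r) := by
      have e1 : (Real.sqrt v)^2 = v := Real.sq_sqrt hvpos.le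
      have e2 : (M ^ (1 - α/2))^2 = M ^ (2-α) := by
        rw [← Real.rpow_natCast (M ^ (1 - α/2)) 2, ← Real.rpow_mul hMpos.le]
        norm_num
        rw [show (1 - α/2) * 2 = 2 - α by ring]
      have e3 : (r ^ ((1:ℝ)/2))^2 = r := by
        rw [← Real.rpow_natCast (r ^ ((1:ℝ)/2)) 2, ← Real.rpow_mul hrpos.le]
        norm_num
      have e4 : (K*u)^2 = K^2 * ((M ^ (1 - α/2))^2 * (r ^ ((1:ℝ)/2))^2) := by
        rw [hu]; ring
      rw [e4, e2, e3, hK, div_pow, e1]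
      ring
    have hbound : 4*r/c ≤ 16/v * (M ^ (2-α) * r) := by
      have h2M : (0:ℝ) < 2*M := by linarith
      have hstep1 : 4*r/c ≤ 4*r/(v*(2*M)^(α-2)) := by
        apply div_le_div_of_nonneg_left (by linarith) (by positivity) hc0
      have hinv : (2*M)^(α-2) = ((2*M)^(2-α))⁻¹ := by
        rw [show α-2 = -(2-α) by ring, Real.rpow_neg h2M.le]
      have hsplit : (2*M)^(2-α) = 2^(2-α) * M^(2-α) :=
        Real.mul_rpow (by norm_num) hMpos.le
      have h2le : (2:ℝ)^(2-α) ≤ 4 := by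
        calc (2:ℝ)^(2-α) ≤ 2^(1:ℝ) :=
          Real.rpow_le_rpow_of_exponent_le one_le_two (by linarith)
        _ ≤ 4 := by rw [Real.rpow_one]; norm_num
      have hMa : 0 < M^(2-α) := Real.rpow_pos_of_pos hMpos _
      have hstep2 : 4*r/(v*(2*M)^(α-2)) = 4*r*(2^(2-α) * M^(2-α))/v := by
        rw [hinv, hsplit]
        field_simp
      rw [hstep2] at hstep1
      calc 4*r/c ≤ 4*r*(2^(2-α) * M^(2-α))/v := hstep1
        _ ≤ 4*r*(4 * M^(2-α))/v := by
            apply (div_le_div_iff_of_pos_right hvpos).mpr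
            nlinarith [mul_le_mul_of_nonneg_left
              (mul_le_mul_of_nonneg_right h2le hMa.le)
              (by linarith : (0:ℝ) ≤ 4*r)]
        _ = 16/v * (M ^ (2-α) * r) := by ring
    calc Real.sqrt (4*r/c) ≤ Real.sqrt ((K*u)^2) := by
          apply Real.sqrt_le_sqrt
          rw [hsq]; exact hbound
      _ = K * u := Real.sqrt_sq hKu
  have hgoal : (32 / Real.sqrt v + 80) * M ^ (1 - α/2) * r ^ ((1:ℝ)/2)
      = (8 * K + 80) * u := by
    rw [hK, hu]; ring
  rw [hgoal]
  linarith [claim1, huge, mul_le_mul_of_nonneg_left huge (by positivity : (0:ℝ) ≤ 8*K)]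


lemma region_step {c₁ c₂ : ℝ} (hc₁ : 0 < c₁) (hc₂ : 0 < c₂) {g₁ g₂ : ℝ → ℝ}
    {I₁ I₂ : Set ℝ} (a : ℝ)
    (h1 : ConvexOn ℝ I₁ (fun x => g₁ x - c₁/2 * x^2))
    (h2 : ConvexOn ℝ I₂ (fun x => g₂ x - c₂/2 * (a - x)^2))
    (S : Set ℤ) (hfin : S.Finite) (hSI : ∀ k ∈ S, (k : ℝ) ∈ I₁ ∩ I₂)
    (l r : ℝ) (hr : 0 ≤ r) (hS : ∀ k ∈ S, |g₁ k + g₂ k - l| ≤ r) :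
    (S.ncard : ℝ) ≤ 2 * (Real.sqrt (4*r/(c₁+c₂)) + 1) :=
  region_count (f := fun x => g₁ x + g₂ x) (c := c₁ + c₂) (by positivity)
    (region_convex a h1 h2) S hfin hSI l r hr hS

/-- Counting bound for the sets `A_{a,l,N₁,N₂}(r)`. -/
theorem counting_A_bound (α : ℝ) (hα₁ : 1 < α) (hα₂ : α < 2) :
    ∃ C > 0, ∀ (a : ℤ) (l r N₁ N₂ : ℝ), 1 / 100 ≤ r → 1 ≤ N₁ → 1 ≤ N₂ →
      {k : ℤ | N₁ ≤ |(k : ℝ)| ∧ |(k : ℝ)| ≤ 2 * N₁ ∧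
          N₂ ≤ |(a : ℝ) - (k : ℝ)| ∧ |(a : ℝ) - (k : ℝ)| ≤ 2 * N₂ ∧
          |(|(k : ℝ)| ^ α + |(a : ℝ) - (k : ℝ)| ^ α - l)| ≤ r}.Finite ∧
      (({k : ℤ | N₁ ≤ |(k : ℝ)| ∧ |(k : ℝ)| ≤ 2 * N₁ ∧
          N₂ ≤ |(a : ℝ) - (k : ℝ)| ∧ |(a : ℝ) - (k : ℝ)| ≤ 2 * N₂ ∧
          |(|(k : ℝ)| ^ α + |(a : ℝ) - (k : ℝ)| ^ α - l)| ≤ r}.ncard : ℝ)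
        ≤ C * (min N₁ N₂) ^ (1 - α / 2) * r ^ ((1 : ℝ) / 2)) := by
  refine ⟨32 / Real.sqrt (α*(α-1)) + 80, ?_, ?_⟩
  · have : 0 < Real.sqrt (α*(α-1)) := Real.sqrt_pos.mpr (by nlinarith)
    positivity
  intro a l r N₁ N₂ hr hN₁ hN₂
  have hrpos : (0:ℝ) < r := lt_of_lt_of_le (by norm_num) hr
  set A : Set ℤ := {k : ℤ | N₁ ≤ |(k : ℝ)| ∧ |(k : ℝ)| ≤ 2 * N₁ ∧
      N₂ ≤ |(a : ℝ) - (k : ℝ)| ∧ |(a : ℝ) - (k : ℝ)| ≤ 2 * N₂ ∧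
      |(|(k : ℝ)| ^ α + |(a : ℝ) - (k : ℝ)| ^ α - l)| ≤ r} with hAdef
  have hAfin : A.Finite := by
    apply (Set.finite_Icc (-⌊2*N₁⌋) ⌊2*N₁⌋).subset
    intro k hk
    obtain ⟨_, p2, _⟩ := hk
    constructor
    · have h1 : -(k:ℝ) ≤ 2*N₁ := by
        have := neg_abs_le (k:ℝ); linarith
      have : -k ≤ ⌊2*N₁⌋ := Int.le_floor.mpr (by push_cast; linarith)
      omega
    · exact Int.le_floor.mpr (le_trans (le_abs_self _) p2)
  set c₁ : ℝ := α*(α-1)*(2*N₁)^(α-2) with hc₁def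
  set c₂ : ℝ := α*(α-1)*(2*N₂)^(α-2) with hc₂def
  have hc₁ : 0 < c₁ := by
    have := Real.rpow_pos_of_pos (show (0:ℝ) < 2*N₁ by linarith) (α-2)
    rw [hc₁def]; exact mul_pos (by nlinarith) this
  have hc₂ : 0 < c₂ := by
    have := Real.rpow_pos_of_pos (show (0:ℝ) < 2*N₂ by linarith) (α-2)
    rw [hc₂def]; exact mul_pos (by nlinarith) this
  have B₁ := convex_strong_rpow α hα₁ hα₂ N₁ (by linarith)
  have B₂ := convex_strong_rpow α hα₁ hα₂ N₂ (by linarith)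
  -- the four pieces
  have P1p : ConvexOn ℝ (Set.Icc N₁ (2*N₁)) (fun x : ℝ => x ^ α - c₁/2 * x^2) := B₁
  have P1n : ConvexOn ℝ {x : ℝ | -x ∈ Set.Icc N₁ (2*N₁)}
      (fun x : ℝ => (-x) ^ α - c₁/2 * x^2) := by
    have h := convexOn_comp_neg B₁
    simpa only [neg_sq] using h
  have P2p : ConvexOn ℝ {x : ℝ | (a:ℝ) - x ∈ Set.Icc N₂ (2*N₂)}
      (fun x : ℝ => ((a:ℝ) - x) ^ α - c₂/2 * ((a:ℝ) - x)^2) := by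
    have h := convexOn_comp_const_sub B₂ (a:ℝ)
    simpa using h
  have P2n : ConvexOn ℝ {x : ℝ | x - (a:ℝ) ∈ Set.Icc N₂ (2*N₂)}
      (fun x : ℝ => (x - (a:ℝ)) ^ α - c₂/2 * ((a:ℝ) - x)^2) := by
    have h := convexOn_comp_sub_const B₂ (a:ℝ)
    have heq : ∀ x : ℝ, (x - (a:ℝ))^2 = ((a:ℝ) - x)^2 := fun x => by ring
    simpa only [heq] using h
  -- the four regions (as subsets of ℤ)
  set S₁ : Set ℤ := A ∩ {k : ℤ | (k:ℝ) ∈ Set.Icc N₁ (2*N₁) ∩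
    {x : ℝ | (a:ℝ) - x ∈ Set.Icc N₂ (2*N₂)}} with hS₁
  set S₂ : Set ℤ := A ∩ {k : ℤ | (k:ℝ) ∈ Set.Icc N₁ (2*N₁) ∩
    {x : ℝ | x - (a:ℝ) ∈ Set.Icc N₂ (2*N₂)}} with hS₂
  set S₃ : Set ℤ := A ∩ {k : ℤ | (k:ℝ) ∈ {x : ℝ | -x ∈ Set.Icc N₁ (2*N₁)} ∩
    {x : ℝ | (a:ℝ) - x ∈ Set.Icc N₂ (2*N₂)}} with hS₃
  set S₄ : Set ℤ := A ∩ {k : ℤ | (k:ℝ) ∈ {x : ℝ | -x ∈ Set.Icc N₁ (2*N₁)} ∩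
    {x : ℝ | x - (a:ℝ) ∈ Set.Icc N₂ (2*N₂)}} with hS₄
  have hcover : A ⊆ S₁ ∪ S₂ ∪ S₃ ∪ S₄ := by
    intro k hk
    have hkeep := hk
    obtain ⟨p1, p2, p3, p4, _⟩ := hkeep
    rcases le_or_gt 0 ((k:ℝ)) with hk0 | hk0 <;>
      rcases le_or_gt 0 ((a:ℝ) - (k:ℝ)) with ha0 | ha0
    · exact Or.inl (Or.inl (Or.inl ⟨hk, ⟨by rwa [abs_of_nonneg hk0] at p1,
        by rwa [abs_of_nonneg hk0] at p2⟩,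
        ⟨by rwa [abs_of_nonneg ha0] at p3, by rwa [abs_of_nonneg ha0] at p4⟩⟩))
    · refine Or.inl (Or.inl (Or.inr ⟨hk, ⟨by rwa [abs_of_nonneg hk0] at p1,
        by rwa [abs_of_nonneg hk0] at p2⟩, ?_, ?_⟩))
      · rw [abs_of_neg ha0] at p3; simpa using p3
      · rw [abs_of_neg ha0] at p4; simpa using p4
    · refine Or.inl (Or.inr ⟨hk, ⟨?_, ?_⟩,
        ⟨by rwa [abs_of_nonneg ha0] at p3, by rwa [abs_of_nonneg ha0] at p4⟩⟩)
      · rw [abs_of_neg hk0] at p1; simpa using p1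
      · rw [abs_of_neg hk0] at p2; simpa using p2
    · refine Or.inr ⟨hk, ⟨?_, ?_⟩, ?_, ?_⟩
      · rw [abs_of_neg hk0] at p1; simpa using p1
      · rw [abs_of_neg hk0] at p2; simpa using p2
      · rw [abs_of_neg ha0] at p3; simpa using p3
      · rw [abs_of_neg ha0] at p4; simpa using p4
  refine ⟨hAfin, ?_⟩
  -- bounds for each region
  have hb₁ : (S₁.ncard : ℝ) ≤ 2 * (Real.sqrt (4*r/(c₁+c₂)) + 1) := by
    apply region_step hc₁ hc₂ (a:ℝ) P1p P2p S₁ (hAfin.subset Set.inter_subset_left)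
      (fun k hk => hk.2) l r hrpos.le
    intro k hk
    obtain ⟨hkA, hkI⟩ := hk
    obtain ⟨⟨hi1, _⟩, hi2, _⟩ := hkI
    have e1 : |(k:ℝ)| = (k:ℝ) := abs_of_nonneg (by linarith)
    have e2 : |(a:ℝ) - (k:ℝ)| = (a:ℝ) - (k:ℝ) := abs_of_nonneg (by linarith)
    have := hkA.2.2.2.2
    rw [e1, e2] at this
    exact this
  have hb₂ : (S₂.ncard : ℝ) ≤ 2 * (Real.sqrt (4*r/(c₁+c₂)) + 1) := by
    apply region_step hc₁ hc₂ (a:ℝ) P1p P2n S₂ (hAfin.subset Set.inter_subset_left)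
      (fun k hk => hk.2) l r hrpos.le
    intro k hk
    obtain ⟨hkA, hkI⟩ := hk
    obtain ⟨⟨hi1, _⟩, hi2, _⟩ := hkI
    have e1 : |(k:ℝ)| = (k:ℝ) := abs_of_nonneg (by linarith)
    have e2 : |(a:ℝ) - (k:ℝ)| = (k:ℝ) - (a:ℝ) := by
      rw [abs_sub_comm]
      exact abs_of_nonneg (by linarith)
    have := hkA.2.2.2.2
    rw [e1, e2] at this
    exact this
  have hb₃ : (S₃.ncard : ℝ) ≤ 2 * (Real.sqrt (4*r/(c₁+c₂)) + 1) := by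
    apply region_step hc₁ hc₂ (a:ℝ) P1n P2p S₃ (hAfin.subset Set.inter_subset_left)
      (fun k hk => hk.2) l r hrpos.le
    intro k hk
    obtain ⟨hkA, hkI⟩ := hk
    obtain ⟨hi1, hi2, _⟩ := hkI
    have e1 : |(k:ℝ)| = -(k:ℝ) := by
      apply abs_of_nonpos
      simp only [Set.mem_setOf_eq, Set.mem_Icc] at hi1; linarith [hi1.1]
    have e2 : |(a:ℝ) - (k:ℝ)| = (a:ℝ) - (k:ℝ) := abs_of_nonneg (by linarith)
    have := hkA.2.2.2.2
    rw [e1, e2] at this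
    exact this
  have hb₄ : (S₄.ncard : ℝ) ≤ 2 * (Real.sqrt (4*r/(c₁+c₂)) + 1) := by
    apply region_step hc₁ hc₂ (a:ℝ) P1n P2n S₄ (hAfin.subset Set.inter_subset_left)
      (fun k hk => hk.2) l r hrpos.le
    intro k hk
    obtain ⟨hkA, hkI⟩ := hk
    obtain ⟨hi1, hi2, _⟩ := hkI
    have e1 : |(k:ℝ)| = -(k:ℝ) := by
      apply abs_of_nonpos
      simp only [Set.mem_setOf_eq, Set.mem_Icc] at hi1; linarith [hi1.1]
    have e2 : |(a:ℝ) - (k:ℝ)| = (k:ℝ) - (a:ℝ) := by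
      rw [abs_sub_comm]
      exact abs_of_nonneg (by linarith)
    have := hkA.2.2.2.2
    rw [e1, e2] at this
    exact this
  -- combine
  have hfin₁ : S₁.Finite := hAfin.subset Set.inter_subset_left
  have hfin₂ : S₂.Finite := hAfin.subset Set.inter_subset_left
  have hfin₃ : S₃.Finite := hAfin.subset Set.inter_subset_left
  have hfin₄ : S₄.Finite := hAfin.subset Set.inter_subset_left
  have hn : A.ncard ≤ S₁.ncard + S₂.ncard + S₃.ncard + S₄.ncard := by
    calc A.ncard ≤ (S₁ ∪ S₂ ∪ S₃ ∪ S₄).ncard :=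
          Set.ncard_le_ncard hcover (((hfin₁.union hfin₂).union hfin₃).union hfin₄)
      _ ≤ (S₁ ∪ S₂ ∪ S₃).ncard + S₄.ncard := Set.ncard_union_le _ _
      _ ≤ (S₁ ∪ S₂).ncard + S₃.ncard + S₄.ncard := by
          have := Set.ncard_union_le (S₁ ∪ S₂) S₃; omega
      _ ≤ S₁.ncard + S₂.ncard + S₃.ncard + S₄.ncard := by
          have := Set.ncard_union_le S₁ S₂; omega
  have hnR : (A.ncard : ℝ) ≤ 8 * (Real.sqrt (4*r/(c₁+c₂)) + 1) := by
    have : (A.ncard : ℝ) ≤ (S₁.ncard : ℝ) + S₂.ncard + S₃.ncard + S₄.ncard := by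
      exact_mod_cast hn
    linarith
  calc (A.ncard : ℝ) ≤ 8 * (Real.sqrt (4*r/(c₁+c₂)) + 1) := hnR
    _ ≤ (32 / Real.sqrt (α*(α-1)) + 80) * (min N₁ N₂) ^ (1 - α / 2) * r ^ ((1:ℝ)/2) :=
        final_arith α hα₁ hα₂ r N₁ N₂ hr hN₁ hN₂
end

section
/- Let 1 < α ≤ 2 and T > 0. There exists C > 0, depending only on α and T, such that for every real N ≥ 1 and every finitely supported family (c_n)_{n∈ℤ} of complex numbers with c_n = 0 unless N ≤ |n| ≤ 2N, the function u(t,x) := ∑_{n∈ℤ} c_n e^{i(n x + |n|^α t)} satisfies (∫₀^T ∫₀^{2π} |u(t,x)|⁴ dx dt)^{1/2} ≤ C · (sup_{a∈ℤ, l∈ℤ} #A_{a,l,N}(1/2))^{1/2} · ∑_{n∈ℤ} |c_n|², where A_{a,l,N}(1/2) := {k ∈ ℤ : N ≤ |k| ≤ 2N, N ≤ |a−k| ≤ 2N, and | |k|^α + |a−k|^α − l | ≤ 1/2}. -/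
open MeasureTheory Complex ComplexConjugate Finset


noncomputable def tri (T t : ℝ) : ℝ := 2 * max 0 (1 - |t - T/2|/T)

lemma tri_nonneg (T t : ℝ) : 0 ≤ tri T t := by
  unfold tri; positivity

lemma tri_le_two (T t : ℝ) (hT : 0 < T) : tri T t ≤ 2 := by
  unfold tri
  have : max 0 (1 - |t - T/2|/T) ≤ 1 := by
    apply max_le (by norm_num)
    have : 0 ≤ |t - T/2|/T := by positivity
    linarith
  linarith

lemma tri_cont (T : ℝ) : Continuous (tri T) := by
  unfold tri
  exact continuous_const.mul (continuous_const.max (continuous_const.sub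
    (((continuous_id.sub continuous_const).abs).div_const T)))

lemma tri_one_le (T t : ℝ) (hT : 0 < T) (h1 : 0 ≤ t) (h2 : t ≤ T) : 1 ≤ tri T t := by
  unfold tri
  have habs : |t - T/2| ≤ T/2 := by rw [abs_le]; constructor <;> linarith
  have hd : |t - T/2|/T ≤ 1/2 := by
    rw [div_le_iff₀ hT]; linarith
  have : 1/2 ≤ 1 - |t - T/2|/T := by linarith
  have h' : 1/2 ≤ max 0 (1 - |t - T/2|/T) := le_max_of_le_right this
  linarith

lemma tri_support (T t : ℝ) (hT : 0 < T) (h : t ∉ Set.Icc (-(T/2)) (3*T/2)) : tri T t = 0 := by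
  unfold tri
  rw [Set.mem_Icc, not_and_or] at h
  have habs : T ≤ |t - T/2| := by
    rcases h with h | h
    · push_neg at h; rw [abs_sub_comm, le_abs]; left; linarith
    · push_neg at h; rw [le_abs]; left; linarith
  have : 1 - |t - T/2|/T ≤ 0 := by
    rw [sub_nonpos, le_div_iff₀ hT]; nlinarith
  rw [max_eq_left this, mul_zero]

lemma tri_hcs (T : ℝ) (hT : 0 < T) : HasCompactSupport (tri T) := by
  apply HasCompactSupport.intro (isCompact_Icc (a := -(T/2)) (b := 3*T/2))
  exact fun t ht => tri_support T t hT ht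

lemma norm_exp_I_mul (s t : ℝ) : ‖Complex.exp (Complex.I * s * t)‖ = 1 := by
  rw [Complex.norm_exp]
  simp [Complex.mul_re]

lemma hasDerivAt_linexp (p q s : ℝ) (hs : s ≠ 0) (t : ℝ) :
    HasDerivAt (fun u : ℝ => (((p:ℂ) + q*u)/(Complex.I*s) - q/(Complex.I*s)^2) * Complex.exp (Complex.I*s*u))
      (((p:ℂ) + q*t) * Complex.exp (Complex.I*s*t)) t := by
  have hz : (Complex.I*(s:ℂ)) ≠ 0 := by
    simp [Complex.ext_iff, hs]
  have h1 : HasDerivAt (fun u : ℝ => ((p:ℂ) + q*u)/(Complex.I*s) - q/(Complex.I*s)^2)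
      ((q:ℂ)/(Complex.I*s)) t := by
    have : HasDerivAt (fun u : ℝ => ((p:ℂ) + q*u)) (q:ℂ) t := by
      simpa using ((hasDerivAt_id t).ofReal_comp.const_mul (q:ℂ)).const_add (p:ℂ)
    simpa using (this.div_const (Complex.I*s)).sub_const ((q:ℂ)/(Complex.I*s)^2)
  have h2 : HasDerivAt (fun u : ℝ => Complex.exp (Complex.I*s*u))
      ((Complex.I*s) * Complex.exp (Complex.I*s*t)) t := by
    have hb : HasDerivAt (fun u : ℝ => (Complex.I*(s:ℂ)*(u:ℂ))) (Complex.I*s) t := by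
      simpa using (hasDerivAt_id t).ofReal_comp.const_mul (Complex.I*(s:ℂ))
    simpa [mul_comm] using hb.cexp
  have := h1.mul h2
  refine this.congr_deriv ?_
  field_simp [Complex.ofReal_ne_zero.mpr hs]
  ring

lemma integral_linexp (p q s a b : ℝ) (hs : s ≠ 0) :
    ∫ t in a..b, (((p:ℂ) + q*t) * Complex.exp (Complex.I*s*t))
      = (((p:ℂ) + q*b)/(Complex.I*s) - q/(Complex.I*s)^2) * Complex.exp (Complex.I*s*b)
        - (((p:ℂ) + q*a)/(Complex.I*s) - q/(Complex.I*s)^2) * Complex.exp (Complex.I*s*a) := by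
  apply intervalIntegral.integral_eq_sub_of_hasDerivAt
  · exact fun t _ => hasDerivAt_linexp p q s hs t
  · apply Continuous.intervalIntegrable
    exact (continuous_const.add (continuous_const.mul Complex.continuous_ofReal)).mul
      ((continuous_const.mul Complex.continuous_ofReal).cexp)

noncomputable def Wt (T s : ℝ) : ℂ := ∫ t : ℝ, (tri T t : ℂ) * Complex.exp (Complex.I * s * t)
lemma Wt_cont_integrand (T s : ℝ) : Continuous (fun t : ℝ => (tri T t : ℂ) * Complex.exp (Complex.I * s * t)) :=
  (Complex.continuous_ofReal.comp (tri_cont T)).mul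
    ((continuous_const.mul Complex.continuous_ofReal).cexp)

lemma Wt_integrable (T s : ℝ) (hT : 0 < T) :
    Integrable (fun t : ℝ => (tri T t : ℂ) * Complex.exp (Complex.I * s * t)) := by
  apply Continuous.integrable_of_hasCompactSupport (Wt_cont_integrand T s)
  apply HasCompactSupport.mul_right
  exact (tri_hcs T hT).comp_left (g := fun x : ℝ => (x:ℂ)) rfl

lemma Wt_eq_interval (T s : ℝ) (hT : 0 < T) :
    Wt T s = ∫ t in (-(T/2))..(3*T/2), (tri T t : ℂ) * Complex.exp (Complex.I * s * t) := by
  have hle : -(T/2) ≤ 3*T/2 := by linarith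
  rw [intervalIntegral.integral_of_le hle, ← integral_Icc_eq_integral_Ioc]
  unfold Wt
  rw [setIntegral_eq_integral_of_forall_compl_eq_zero]
  intro t ht
  rw [tri_support T t hT ht]
  simp

lemma Wt_norm_le (T s : ℝ) (hT : 0 < T) : ‖Wt T s‖ ≤ 4*T := by
  have h1 : ‖Wt T s‖ ≤ ∫ t : ℝ, ‖(tri T t : ℂ) * Complex.exp (Complex.I * s * t)‖ :=
    norm_integral_le_integral_norm _
  have h2 : ∀ t : ℝ, ‖(tri T t : ℂ) * Complex.exp (Complex.I * s * t)‖ = tri T t := by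
    intro t
    rw [norm_mul, norm_exp_I_mul, Complex.norm_real, Real.norm_of_nonneg (tri_nonneg T t), mul_one]
  rw [funext h2] at h1
  have h3 : ∫ t : ℝ, tri T t = ∫ t in Set.Icc (-(T/2)) (3*T/2), tri T t := by
    rw [setIntegral_eq_integral_of_forall_compl_eq_zero]
    exact fun t ht => tri_support T t hT ht
  have h4 : ∫ t in Set.Icc (-(T/2)) (3*T/2), tri T t ≤ ∫ t in Set.Icc (-(T/2)) (3*T/2), (2:ℝ) := by
    apply setIntegral_mono_on
    · exact (tri_cont T).continuousOn.integrableOn_compact isCompact_Icc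
    · exact continuousOn_const.integrableOn_compact isCompact_Icc
    · exact measurableSet_Icc
    · exact fun t _ => tri_le_two T t hT
  have h5 : ∫ t in Set.Icc (-(T/2)) (3*T/2), (2:ℝ) = 4*T := by
    rw [setIntegral_const, Real.volume_real_Icc, smul_eq_mul]
    rw [max_eq_left (by linarith)]
    ring
  linarith

lemma Wt_eq_closed (T s : ℝ) (hT : 0 < T) (hs : s ≠ 0) :
    Wt T s = (((2/T:ℝ):ℂ)/(Complex.I*s)^2) *
      (Complex.exp (Complex.I*s*((-(T/2):ℝ):ℂ)) - 2*Complex.exp (Complex.I*s*((T/2:ℝ):ℂ))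
        + Complex.exp (Complex.I*s*((3*T/2:ℝ):ℂ))) := by
  have hz : (Complex.I*(s:ℂ)) ≠ 0 := by simp [Complex.ext_iff, hs]
  have hT' : (T:ℝ) ≠ 0 := ne_of_gt hT
  rw [Wt_eq_interval T s hT]
  have hsplit : ∫ t in (-(T/2))..(3*T/2), (tri T t : ℂ) * Complex.exp (Complex.I * s * t)
      = (∫ t in (-(T/2))..(T/2), (tri T t : ℂ) * Complex.exp (Complex.I * s * t))
        + ∫ t in (T/2)..(3*T/2), (tri T t : ℂ) * Complex.exp (Complex.I * s * t) := by
    rw [intervalIntegral.integral_add_adjacent_intervals] <;>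
      exact (Wt_cont_integrand T s).intervalIntegrable _ _
  have e1 : ∫ t in (-(T/2))..(T/2), (tri T t : ℂ) * Complex.exp (Complex.I * s * t)
      = ∫ t in (-(T/2))..(T/2), (((1:ℝ):ℂ) + ((2/T:ℝ):ℂ)*(t:ℂ)) * Complex.exp (Complex.I * s * t) := by
    apply intervalIntegral.integral_congr
    intro t ht
    rw [Set.uIcc_of_le (by linarith), Set.mem_Icc] at ht
    obtain ⟨ht1, ht2⟩ := ht
    have habs : |t - T/2| = T/2 - t := by rw [_root_.abs_of_nonpos (by linarith)]; ring
    have hle1 : (T/2 - t)/T ≤ 1 := by rw [div_le_one hT]; linarith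
    have : tri T t = 1 + (2/T)*t := by
      unfold tri; rw [habs, max_eq_right (by linarith)]
      field_simp; ring
    simp only [this]; push_cast; ring
  have e2 : ∫ t in (T/2)..(3*T/2), (tri T t : ℂ) * Complex.exp (Complex.I * s * t)
      = ∫ t in (T/2)..(3*T/2), (((3:ℝ):ℂ) + ((-(2/T) : ℝ):ℂ)*(t:ℂ)) * Complex.exp (Complex.I * s * t) := by
    apply intervalIntegral.integral_congr
    intro t ht
    rw [Set.uIcc_of_le (by linarith), Set.mem_Icc] at ht
    obtain ⟨ht1, ht2⟩ := ht
    have habs : |t - T/2| = t - T/2 := by rw [_root_.abs_of_nonneg (by linarith)]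
    have hle1 : (t - T/2)/T ≤ 1 := by rw [div_le_one hT]; linarith
    have : tri T t = 3 + (-(2/T))*t := by
      unfold tri; rw [habs, max_eq_right (by linarith)]
      field_simp; ring
    simp only [this]; push_cast; ring
  rw [hsplit, e1, e2, integral_linexp 1 (2/T) s _ _ hs, integral_linexp 3 (-(2/T)) s _ _ hs]
  have hTC : ((T:ℝ):ℂ) ≠ 0 := by exact_mod_cast hT'
  have c1 : (((1:ℝ):ℂ) + ((2/T:ℝ):ℂ)*((T/2:ℝ):ℂ)) = 2 := by
    push_cast; field_simp; norm_num
  have c2 : (((1:ℝ):ℂ) + ((2/T:ℝ):ℂ)*((-(T/2):ℝ):ℂ)) = 0 := by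
    push_cast; field_simp; ring
  have c3 : (((3:ℝ):ℂ) + ((-(2/T):ℝ):ℂ)*((3*T/2:ℝ):ℂ)) = 0 := by
    push_cast; field_simp; ring
  have c4 : (((3:ℝ):ℂ) + ((-(2/T):ℝ):ℂ)*((T/2:ℝ):ℂ)) = 2 := by
    push_cast; field_simp; ring
  have c5 : ((-(2/T):ℝ):ℂ) = -((2/T:ℝ):ℂ) := by push_cast; ring
  rw [c1, c2, c3, c4, c5]
  ring

lemma Wt_norm_decay (T s : ℝ) (hT : 0 < T) (hs : s ≠ 0) : ‖Wt T s‖ ≤ 8/(T*s^2) := by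
  rw [Wt_eq_closed T s hT hs, norm_mul, norm_div]
  have h1 : ‖((2/T:ℝ):ℂ)‖ = 2/T := by
    rw [Complex.norm_real, Real.norm_of_nonneg (by positivity)]
  have h2 : ‖(Complex.I*(s:ℂ))^2‖ = s^2 := by
    rw [norm_pow, norm_mul, Complex.norm_I, one_mul, Complex.norm_real, Real.norm_eq_abs, _root_.sq_abs]
  have h3 : ‖Complex.exp (Complex.I*s*((-(T/2):ℝ):ℂ)) - 2*Complex.exp (Complex.I*s*((T/2:ℝ):ℂ))
        + Complex.exp (Complex.I*s*((3*T/2:ℝ):ℂ))‖ ≤ 4 := by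
    refine le_trans (norm_add_le _ _) ?_
    have := norm_sub_le (Complex.exp (Complex.I*s*((-(T/2):ℝ):ℂ))) (2*Complex.exp (Complex.I*s*((T/2:ℝ):ℂ)))
    rw [norm_exp_I_mul s (3*T/2)]
    rw [norm_exp_I_mul s (-(T/2)), norm_mul, norm_exp_I_mul s (T/2)] at this
    simp only [Complex.norm_ofNat] at this
    linarith
  rw [h1, h2]
  calc (2/T)/s^2 * ‖_‖ ≤ (2/T)/s^2 * 4 := by
        apply mul_le_mul_of_nonneg_left h3 (by positivity)
    _ = 8/(T*s^2) := by field_simp; ring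

lemma Wt_norm_symm (T s : ℝ) : ‖Wt T (-s)‖ = ‖Wt T s‖ := by
  have : Wt T (-s) = (starRingEnd ℂ) (Wt T s) := by
    unfold Wt
    rw [← integral_conj]
    congr 1
    funext t
    rw [map_mul, ← Complex.exp_conj, Complex.conj_ofReal]
    congr 2
    simp [Complex.ext_iff]
  rw [this, RCLike.norm_conj]

lemma tele_sum_nat (n : ℕ) :
    ∑ j ∈ Finset.Icc (2:ℤ) (2+(n:ℤ)), (1/((j:ℝ)-1) - 1/(j:ℝ)) = 1 - 1/((2+(n:ℤ) : ℤ):ℝ) := by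
  induction n with
  | zero => norm_num
  | succ m ih =>
    have hins : Finset.Icc (2:ℤ) (2+((m:ℤ)+1)) = insert (2+(m:ℤ)+1) (Finset.Icc 2 (2+(m:ℤ))) := by
      ext j; simp [Finset.mem_Icc, Finset.mem_insert]; omega
    have hnot : 2+(m:ℤ)+1 ∉ Finset.Icc (2:ℤ) (2+(m:ℤ)) := by simp
    push_cast
    push_cast at ih
    rw [show (2:ℤ)+((m:ℤ)+1) = 2+(m:ℤ)+1 by ring] at hins ⊢
    rw [hins, Finset.sum_insert hnot, ih]
    have hm2 : ((m:ℝ)+2) ≠ 0 := by positivity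
    have hm3 : ((m:ℝ)+3) ≠ 0 := by positivity
    push_cast
    rw [show (2:ℝ)+(m:ℝ)+1-1 = (m:ℝ)+2 by ring, show (2:ℝ)+(m:ℝ)+1 = (m:ℝ)+3 by ring,
      show (2:ℝ)+((m:ℝ)+1) = (m:ℝ)+3 by ring, show (2:ℝ)+(m:ℝ) = (m:ℝ)+2 by ring]
    field_simp
    ring

lemma tele_sum (b : ℤ) (hb : 2 ≤ b) :
    ∑ j ∈ Finset.Icc (2:ℤ) b, (1/((j:ℝ)-1) - 1/(j:ℝ)) = 1 - 1/(b:ℝ) := by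
  obtain ⟨n, rfl⟩ : ∃ n:ℕ, b = 2+(n:ℤ) := ⟨(b-2).toNat, by omega⟩
  exact_mod_cast tele_sum_nat n

lemma sum_inv_sq_le (J : Finset ℤ) (hJ : ∀ j ∈ J, 2 ≤ j) : ∑ j ∈ J, 1/((j:ℝ))^2 ≤ 1 := by
  have step : ∀ j ∈ J, 1/((j:ℝ))^2 ≤ 1/((j:ℝ)-1) - 1/(j:ℝ) := by
    intro j hj
    have h2 : (2:ℝ) ≤ (j:ℝ) := by exact_mod_cast hJ j hj
    rw [div_sub_div _ _ (by linarith) (by linarith)]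
    rw [div_le_div_iff₀ (by positivity) (by nlinarith)]
    nlinarith
  set B : ℤ := 2 + ((J.sup Int.toNat : ℕ) : ℤ) with hBdef
  have hB2 : (2:ℤ) ≤ B := by omega
  have hBub : ∀ j ∈ J, j ≤ B := by
    intro j hj
    have h1 : j.toNat ≤ J.sup Int.toNat := Finset.le_sup (f := Int.toNat) hj
    have h2 : j ≤ (j.toNat : ℤ) := Int.self_le_toNat j
    omega
  calc ∑ j ∈ J, 1/((j:ℝ))^2 ≤ ∑ j ∈ J, (1/((j:ℝ)-1) - 1/(j:ℝ)) := Finset.sum_le_sum step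
    _ ≤ ∑ j ∈ Finset.Icc (2:ℤ) B, (1/((j:ℝ)-1) - 1/(j:ℝ)) := by
        apply Finset.sum_le_sum_of_subset_of_nonneg
        · intro j hj
          rw [Finset.mem_Icc]
          exact ⟨hJ j hj, hBub j hj⟩
        · intro j hj _
          rw [Finset.mem_Icc] at hj
          have h2 : (2:ℝ) ≤ (j:ℝ) := by exact_mod_cast hj.1
          have : 1/((j:ℝ)) ≤ 1/((j:ℝ)-1) := by
            apply one_div_le_one_div_of_le (by linarith) (by linarith)
          linarith
    _ = 1 - 1/((B:ℤ):ℝ) := tele_sum _ hB2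
    _ ≤ 1 := by
        have h2 : (2:ℝ) ≤ ((B:ℤ):ℝ) := by exact_mod_cast hB2
        have : 0 ≤ 1/((B:ℤ):ℝ) := by positivity
        linarith

lemma tail_sum (x : ℝ) (L : Finset ℤ) (hL : ∀ l ∈ L, 2 < |x - (l:ℝ)|) :
    ∑ l ∈ L, 1/(x - (l:ℝ))^2 ≤ 2 := by
  classical
  have key : ∀ (L' : Finset ℤ) (g : ℤ → ℤ), (∀ l ∈ L', 2 ≤ g l) →
      (∀ l ∈ L', ((g l : ℝ)) ≤ |x - (l:ℝ)|) → (Set.InjOn g L') →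
      ∑ l ∈ L', 1/(x - (l:ℝ))^2 ≤ 1 := by
    intro L' g hg2 hgle hginj
    calc ∑ l ∈ L', 1/(x - (l:ℝ))^2 ≤ ∑ l ∈ L', 1/((g l : ℝ))^2 := by
          apply Finset.sum_le_sum
          intro l hl
          have h2 : (2:ℝ) ≤ (g l : ℝ) := by exact_mod_cast hg2 l hl
          have hle := hgle l hl
          apply one_div_le_one_div_of_le (by positivity)
          calc ((g l:ℝ))^2 ≤ |x - (l:ℝ)|^2 := by nlinarith [abs_nonneg (x - (l:ℝ))]
            _ = (x - (l:ℝ))^2 := sq_abs _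
      _ = ∑ j ∈ L'.image g, 1/((j:ℝ))^2 := (Finset.sum_image (f := fun j : ℤ => 1/((j:ℝ))^2) (fun a ha b hb h => hginj ha hb h)).symm
      _ ≤ 1 := by
          apply sum_inv_sq_le
          intro j hj
          rw [Finset.mem_image] at hj
          obtain ⟨l, hl, rfl⟩ := hj
          exact hg2 l hl
  have hsplit := Finset.sum_filter_add_sum_filter_not L (fun l : ℤ => x < (l:ℝ)) (fun l => 1/(x - (l:ℝ))^2)
  rw [← hsplit]
  have h1 : ∑ l ∈ L.filter (fun l : ℤ => x < (l:ℝ)), 1/(x - (l:ℝ))^2 ≤ 1 := by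
    apply key _ (fun l => l + ⌊-x⌋)
    · intro l hl
      rw [Finset.mem_filter] at hl
      have habs := hL l hl.1
      have hgt : 2 < (l:ℝ) - x := by
        rw [abs_sub_comm, _root_.abs_of_pos (by linarith [hl.2])] at habs; linarith
      have : (2:ℤ) ≤ ⌊(l:ℝ) - x⌋ := by
        rw [Int.le_floor]; push_cast; linarith
      have h3 : ⌊(l:ℝ) - x⌋ = ⌊-x⌋ + l := by
        rw [show (l:ℝ) - x = -x + ((l:ℤ):ℝ) by push_cast; ring, Int.floor_add_intCast]
      rw [h3] at this
      linarith
    · intro l hl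
      rw [Finset.mem_filter] at hl
      have hgt : x < (l:ℝ) := hl.2
      have h1 : ((l + ⌊-x⌋ : ℤ):ℝ) ≤ (l:ℝ) - x := by
        push_cast
        have := Int.floor_le (-x)
        linarith
      rw [abs_sub_comm, _root_.abs_of_pos (by linarith)]
      exact h1
    · intro a _ b _ h
      have h' : a + ⌊-x⌋ = b + ⌊-x⌋ := h
      omega
  have h2 : ∑ l ∈ L.filter (fun l : ℤ => ¬ x < (l:ℝ)), 1/(x - (l:ℝ))^2 ≤ 1 := by
    apply key _ (fun l => ⌊x⌋ - l)
    · intro l hl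
      rw [Finset.mem_filter] at hl
      have habs := hL l hl.1
      have hle : (l:ℝ) ≤ x := by push_neg at hl; exact hl.2
      have hgt : 2 < x - (l:ℝ) := by
        rw [_root_.abs_of_nonneg (by linarith)] at habs; linarith
      have : (2:ℤ) ≤ ⌊x - (l:ℝ)⌋ := by
        rw [Int.le_floor]; push_cast; linarith
      have h3 : ⌊x - (l:ℝ)⌋ = ⌊x⌋ + (-l) := by
        rw [show x - (l:ℝ) = x + ((-l:ℤ):ℝ) by push_cast; ring, Int.floor_add_intCast]
      rw [h3] at this
      linarith
    · intro l hl
      rw [Finset.mem_filter] at hl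
      have hle : (l:ℝ) ≤ x := by push_neg at hl; exact hl.2
      have habs := hL l hl.1
      have hgt : 2 < x - (l:ℝ) := by
        rw [_root_.abs_of_nonneg (by linarith)] at habs; linarith
      have h1 : ((⌊x⌋ - l : ℤ):ℝ) ≤ x - (l:ℝ) := by
        push_cast
        have := Int.floor_le x
        linarith
      rw [_root_.abs_of_nonneg (show (0:ℝ) ≤ x - (l:ℝ) by linarith)]
      exact h1
    · intro a _ b _ h
      have h' : ⌊x⌋ - a = ⌊x⌋ - b := h
      omega
  linarith

lemma near_card (x : ℝ) (L : Finset ℤ) :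
    ((L.filter (fun l : ℤ => |x - (l:ℝ)| ≤ 2)).card : ℝ) ≤ 5 := by
  have hsub : L.filter (fun l : ℤ => |x - (l:ℝ)| ≤ 2) ⊆ Finset.Icc ⌈x-2⌉ ⌊x+2⌋ := by
    intro l hl
    rw [Finset.mem_filter] at hl
    rw [abs_le] at hl
    rw [Finset.mem_Icc]
    constructor
    · rw [Int.ceil_le]; linarith [hl.2.1, hl.2.2]
    · rw [Int.le_floor]; linarith [hl.2.1, hl.2.2]
  have h1 : (L.filter (fun l : ℤ => |x - (l:ℝ)| ≤ 2)).card ≤ (Finset.Icc ⌈x-2⌉ ⌊x+2⌋).card :=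
    Finset.card_le_card hsub
  have h2 : (Finset.Icc ⌈x-2⌉ ⌊x+2⌋).card = (⌊x+2⌋ + 1 - ⌈x-2⌉).toNat := Int.card_Icc _ _
  have h3 : ⌊x+2⌋ + 1 - ⌈x-2⌉ ≤ 5 := by
    have hf : ((⌊x+2⌋ : ℤ):ℝ) ≤ x+2 := Int.floor_le _
    have hc : x-2 ≤ ((⌈x-2⌉ : ℤ):ℝ) := Int.le_ceil _
    have : ((⌊x+2⌋ + 1 - ⌈x-2⌉ : ℤ):ℝ) ≤ 5 := by push_cast; linarith
    exact_mod_cast this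
  have h4 : (⌊x+2⌋ + 1 - ⌈x-2⌉).toNat ≤ 5 := by omega
  have := le_trans h1 (h2 ▸ h4)
  exact_mod_cast this

lemma hfun_sum (T x : ℝ) (hT : 0 < T) (L : Finset ℤ) :
    ∑ l ∈ L, (if |x - (l:ℝ)| ≤ 2 then 4*T else 32/(T*(x-(l:ℝ))^2)) ≤ 20*T + 64/T := by
  classical
  rw [Finset.sum_ite]
  have hnear : ∑ _l ∈ L.filter (fun l : ℤ => |x - (l:ℝ)| ≤ 2), (4*T) ≤ 20*T := by
    rw [Finset.sum_const, nsmul_eq_mul]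
    have := near_card x L
    nlinarith
  have hfar : ∑ l ∈ L.filter (fun l : ℤ => ¬ |x - (l:ℝ)| ≤ 2), 32/(T*(x-(l:ℝ))^2) ≤ 64/T := by
    have heq : ∀ l : ℤ, 32/(T*(x-(l:ℝ))^2) = (32/T) * (1/(x-(l:ℝ))^2) := by
      intro l; field_simp
    calc ∑ l ∈ L.filter (fun l : ℤ => ¬ |x - (l:ℝ)| ≤ 2), 32/(T*(x-(l:ℝ))^2)
        = (32/T) * ∑ l ∈ L.filter (fun l : ℤ => ¬ |x - (l:ℝ)| ≤ 2), 1/(x-(l:ℝ))^2 := by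
          rw [Finset.mul_sum]; exact Finset.sum_congr rfl (fun l _ => heq l)
      _ ≤ (32/T) * 2 := by
          apply mul_le_mul_of_nonneg_left _ (by positivity)
          apply tail_sum
          intro l hl
          rw [Finset.mem_filter] at hl
          push_neg at hl
          exact hl.2
      _ = 64/T := by ring
  linarith

lemma Wt_row_sum (T x M : ℝ) (hT : 0 < T) {ι : Type*} [DecidableEq ι] (K : Finset ι) (μ : ι → ℝ)
    (hM : ∀ l : ℤ, (((K.filter fun k => |μ k - (l:ℝ)| ≤ 1/2)).card : ℝ) ≤ M) :
    ∑ k ∈ K, ‖Wt T (x - μ k)‖ ≤ M * (20*T + 64/T) := by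
  classical
  have hM0 : 0 ≤ M := le_trans (by positivity) (hM 0)
  set r : ι → ℤ := fun k => round (μ k) with hr
  set h : ℤ → ℝ := fun l => if |x - (l:ℝ)| ≤ 2 then 4*T else 32/(T*(x-(l:ℝ))^2) with hh
  have hbound : ∀ k ∈ K, ‖Wt T (x - μ k)‖ ≤ h (r k) := by
    intro k _
    by_cases hc : |x - ((r k : ℤ):ℝ)| ≤ 2
    · rw [hh]; simp only [hc, if_true]
      exact Wt_norm_le T _ hT
    · rw [hh]; simp only [hc, if_false]
      push_neg at hc
      have hround : |μ k - ((r k : ℤ):ℝ)| ≤ 1/2 := abs_sub_round (μ k)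
      have hlow : |x - ((r k:ℤ):ℝ)|/2 ≤ |x - μ k| := by
        have htri : |x - ((r k:ℤ):ℝ)| ≤ |x - μ k| + |μ k - ((r k:ℤ):ℝ)| := abs_sub_le _ _ _
        linarith [abs_nonneg (x - μ k)]
      have hpos : 0 < |x - μ k| := by linarith
      have hne : x - μ k ≠ 0 := by
        intro hz; rw [hz] at hpos; simp at hpos
      have hsq1 : 0 < (x - μ k)^2 := by nlinarith [_root_.sq_abs (x - μ k)]
      have hsq2 : 0 < (x - ((r k:ℤ):ℝ))^2 := by nlinarith [_root_.sq_abs (x - ((r k:ℤ):ℝ))]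
      refine le_trans (Wt_norm_decay T _ hT hne) ?_
      rw [div_le_div_iff₀ (by positivity) (by positivity)]
      have h1 : (x - ((r k:ℤ):ℝ))^2 ≤ 4 * (x - μ k)^2 := by
        nlinarith [_root_.sq_abs (x - ((r k:ℤ):ℝ)), _root_.sq_abs (x - μ k), hlow, abs_nonneg (x - ((r k:ℤ):ℝ)), abs_nonneg (x - μ k)]
      nlinarith [sq_nonneg (x - μ k), hT]
  calc ∑ k ∈ K, ‖Wt T (x - μ k)‖
      ≤ ∑ k ∈ K, h (r k) := Finset.sum_le_sum hbound
    _ = ∑ l ∈ K.image r, ∑ k ∈ K.filter (fun k => r k = l), h (r k) :=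
        (Finset.sum_fiberwise_of_maps_to (fun k hk => Finset.mem_image_of_mem r hk) _).symm
    _ ≤ ∑ l ∈ K.image r, M * h l := by
        apply Finset.sum_le_sum
        intro l hl
        have hcongr : ∑ k ∈ K.filter (fun k => r k = l), h (r k)
            = ∑ _k ∈ K.filter (fun k => r k = l), h l := by
          apply Finset.sum_congr rfl
          intro k hk
          rw [Finset.mem_filter] at hk
          rw [hk.2]
        rw [hcongr, Finset.sum_const, nsmul_eq_mul]
        have hcard : ((K.filter (fun k => r k = l)).card : ℝ) ≤ M := by
          refine le_trans ?_ (hM l)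
          have hsub : K.filter (fun k => r k = l) ⊆ K.filter (fun k => |μ k - (l:ℝ)| ≤ 1/2) := by
            intro k hk
            rw [Finset.mem_filter] at hk ⊢
            refine ⟨hk.1, ?_⟩
            rw [← hk.2]
            exact abs_sub_round (μ k)
          exact_mod_cast Finset.card_le_card hsub
        have hpos : 0 ≤ h l := by
          rw [hh]; dsimp only; split
          · positivity
          · positivity
        exact mul_le_mul_of_nonneg_right hcard hpos
    _ ≤ M * (20*T + 64/T) := by
        rw [← Finset.mul_sum]
        exact mul_le_mul_of_nonneg_left (hfun_sum T x hT _) hM0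

lemma core_lemma (T : ℝ) (hT : 0 < T) {ι : Type*} [DecidableEq ι] (K : Finset ι)
    (d : ι → ℂ) (μ : ι → ℝ) (M : ℝ)
    (hM : ∀ l : ℤ, (((K.filter fun k => |μ k - (l:ℝ)| ≤ 1/2)).card : ℝ) ≤ M) :
    ∫ t in Set.Ioc (0:ℝ) T, ‖∑ k ∈ K, d k * Complex.exp (Complex.I * μ k * t)‖^2
      ≤ (20*T + 64/T) * M * ∑ k ∈ K, ‖d k‖^2 := by
  classical
  have hM0 : 0 ≤ M := le_trans (by positivity) (hM 0)
  set F : ℝ → ℂ := fun t => ∑ k ∈ K, d k * Complex.exp (Complex.I * μ k * t) with hF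
  have hFcont : Continuous F := by
    apply continuous_finset_sum
    intro k _
    exact continuous_const.mul ((continuous_const.mul Complex.continuous_ofReal).cexp)
  have hnormsq_cont : Continuous (fun t => ‖F t‖^2) := (hFcont.norm).pow 2
  -- each exponential-pair integrand
  set G : ℝ → ℂ := fun t => (tri T t : ℂ) * (F t * conj (F t)) with hG
  have hGcont : Continuous G :=
    (Complex.continuous_ofReal.comp (tri_cont T)).mul (hFcont.mul (Complex.continuous_conj.comp hFcont))
  have htriC : HasCompactSupport (fun t : ℝ => (tri T t : ℂ)) :=
    (tri_hcs T hT).comp_left (g := fun x : ℝ => (x:ℂ)) rfl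
  have hGhcs : HasCompactSupport G := htriC.mul_right
  have hGint : Integrable G := hGcont.integrable_of_hasCompactSupport hGhcs
  -- step 1: cut off
  have step1 : ∫ t in Set.Ioc (0:ℝ) T, ‖F t‖^2 ≤ ∫ t in Set.Ioc (0:ℝ) T, tri T t * ‖F t‖^2 := by
    apply setIntegral_mono_on
    · exact (hnormsq_cont.continuousOn).integrableOn_compact isCompact_Icc |>.mono_set Set.Ioc_subset_Icc_self
    · exact (((tri_cont T).mul hnormsq_cont).continuousOn).integrableOn_compact isCompact_Icc |>.mono_set Set.Ioc_subset_Icc_self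
    · exact measurableSet_Ioc
    · intro t ht
      rw [Set.mem_Ioc] at ht
      have h1 := tri_one_le T t hT (le_of_lt ht.1) ht.2
      nlinarith [sq_nonneg ‖F t‖, norm_nonneg (F t)]
  -- step 2: extend to ℝ
  have step2 : ∫ t in Set.Ioc (0:ℝ) T, tri T t * ‖F t‖^2 ≤ ∫ t : ℝ, tri T t * ‖F t‖^2 := by
    apply setIntegral_le_integral
    · exact ((tri_cont T).mul hnormsq_cont).integrable_of_hasCompactSupport
        ((tri_hcs T hT).mul_right)
    · apply Filter.Eventually.of_forall
      intro t
      have := tri_nonneg T t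
      positivity
  -- step 3: equals real part of complex integral
  have hpoint : ∀ t : ℝ, tri T t * ‖F t‖^2 = (G t).re := by
    intro t
    rw [hG]
    simp only [Complex.mul_conj]
    rw [← Complex.ofReal_mul]
    rw [Complex.ofReal_re]
    rw [Complex.normSq_eq_norm_sq]
  have step3 : ∫ t : ℝ, tri T t * ‖F t‖^2 = (∫ t : ℝ, G t).re := by
    have h := integral_re hGint
    simp only [RCLike.re_to_complex] at h
    rw [← h]
    congr 1
    funext t
    exact hpoint t
  -- step 4: expand the integral as double sum
  have hexpand : ∀ t : ℝ, G t = ∑ k ∈ K, ∑ k' ∈ K,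
      (d k * conj (d k')) * ((tri T t : ℂ) * Complex.exp (Complex.I * (μ k - μ k') * t)) := by
    intro t
    simp only [hG, hF]
    rw [map_sum]
    rw [Finset.sum_mul_sum]
    rw [Finset.mul_sum]
    apply Finset.sum_congr rfl
    intro k _
    rw [Finset.mul_sum]
    apply Finset.sum_congr rfl
    intro k' _
    rw [map_mul, ← Complex.exp_conj]
    have hconj : conj (Complex.I * (μ k' : ℂ) * (t:ℂ)) = -(Complex.I * (μ k' : ℂ) * (t:ℂ)) := by
      simp [Complex.ext_iff]
    rw [hconj]
    rw [show Complex.I * (((μ k:ℝ):ℂ) - ((μ k':ℝ):ℂ)) * (t:ℂ)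
        = Complex.I * ((μ k:ℝ):ℂ) * (t:ℂ) + -(Complex.I * ((μ k':ℝ):ℂ) * (t:ℂ)) by ring]
    rw [Complex.exp_add]
    ring
  have step4 : ∫ t : ℝ, G t = ∑ k ∈ K, ∑ k' ∈ K, (d k * conj (d k')) * Wt T (μ k - μ k') := by
    rw [integral_congr_ae (Filter.Eventually.of_forall hexpand)]
    rw [integral_finset_sum]
    · apply Finset.sum_congr rfl
      intro k _
      rw [integral_finset_sum]
      · apply Finset.sum_congr rfl
        intro k' _
        rw [integral_const_mul]
        congr 1
        unfold Wt
        congr 1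
        funext u
        norm_cast
      · intro k' _
        apply Integrable.const_mul
        apply Continuous.integrable_of_hasCompactSupport
        · exact (Complex.continuous_ofReal.comp (tri_cont T)).mul
            ((continuous_const.mul Complex.continuous_ofReal).cexp)
        · exact htriC.mul_right
    · intro k _
      apply integrable_finset_sum
      intro k' _
      apply Integrable.const_mul
      apply Continuous.integrable_of_hasCompactSupport
      · exact (Complex.continuous_ofReal.comp (tri_cont T)).mul
          ((continuous_const.mul Complex.continuous_ofReal).cexp)
      · exact htriC.mul_right
  -- step 5: bound the double sum
  have step5 : (∑ k ∈ K, ∑ k' ∈ K, (d k * conj (d k')) * Wt T (μ k - μ k')).re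
      ≤ (20*T + 64/T) * M * ∑ k ∈ K, ‖d k‖^2 := by
    have hre : (∑ k ∈ K, ∑ k' ∈ K, (d k * conj (d k')) * Wt T (μ k - μ k')).re
        ≤ ∑ k ∈ K, ∑ k' ∈ K, ‖d k‖ * ‖d k'‖ * ‖Wt T (μ k - μ k')‖ := by
      refine le_trans (Complex.re_le_norm _) ?_
      refine le_trans (norm_sum_le _ _) ?_
      apply Finset.sum_le_sum
      intro k _
      refine le_trans (norm_sum_le _ _) ?_
      apply Finset.sum_le_sum
      intro k' _
      rw [norm_mul, norm_mul, RCLike.norm_conj]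
    have hrow : ∀ x : ℝ, ∑ k' ∈ K, ‖Wt T (x - μ k')‖ ≤ M * (20*T + 64/T) :=
      fun x => Wt_row_sum T x M hT K μ hM
    have hrow2 : ∀ k' : ι, ∑ k ∈ K, ‖Wt T (μ k - μ k')‖ ≤ M * (20*T + 64/T) := by
      intro k'
      have heq : ∀ k : ι, ‖Wt T (μ k - μ k')‖ = ‖Wt T (μ k' - μ k)‖ := by
        intro k
        rw [← Wt_norm_symm T (μ k' - μ k), show -(μ k' - μ k) = μ k - μ k' by ring]
      calc ∑ k ∈ K, ‖Wt T (μ k - μ k')‖ = ∑ k ∈ K, ‖Wt T (μ k' - μ k)‖ :=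
            Finset.sum_congr rfl (fun k _ => heq k)
        _ ≤ M * (20*T + 64/T) := hrow (μ k')
    have hterm : ∀ k ∈ K, ∑ k' ∈ K, ‖d k‖ * ‖d k'‖ * ‖Wt T (μ k - μ k')‖
        ≤ ∑ k' ∈ K, ((1/2)*(‖d k‖^2 * ‖Wt T (μ k - μ k')‖) + (1/2)*(‖d k'‖^2 * ‖Wt T (μ k - μ k')‖)) := by
      intro k _
      apply Finset.sum_le_sum
      intro k' _
      have h1 : ‖d k‖ * ‖d k'‖ ≤ (‖d k‖^2 + ‖d k'‖^2)/2 := by nlinarith [sq_nonneg (‖d k‖ - ‖d k'‖)]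
      have h2 := norm_nonneg (Wt T (μ k - μ k'))
      nlinarith
    have hS1 : ∑ k ∈ K, ∑ k' ∈ K, (1/2)*(‖d k‖^2 * ‖Wt T (μ k - μ k')‖)
        ≤ (1/2) * (M * (20*T + 64/T)) * ∑ k ∈ K, ‖d k‖^2 := by
      rw [Finset.mul_sum]
      apply Finset.sum_le_sum
      intro k _
      rw [← Finset.mul_sum, ← Finset.mul_sum]
      have := mul_le_mul_of_nonneg_left (hrow (μ k)) (sq_nonneg ‖d k‖)
      calc (1/2) * (‖d k‖^2 * ∑ k' ∈ K, ‖Wt T (μ k - μ k')‖)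
          ≤ (1/2) * (‖d k‖^2 * (M * (20*T + 64/T))) := by linarith
        _ = (1/2) * (M * (20*T + 64/T)) * ‖d k‖^2 := by ring
    have hS2 : ∑ k ∈ K, ∑ k' ∈ K, (1/2)*(‖d k'‖^2 * ‖Wt T (μ k - μ k')‖)
        ≤ (1/2) * (M * (20*T + 64/T)) * ∑ k ∈ K, ‖d k‖^2 := by
      rw [Finset.sum_comm]
      rw [Finset.mul_sum]
      apply Finset.sum_le_sum
      intro k' _
      rw [← Finset.mul_sum, ← Finset.mul_sum]
      have := mul_le_mul_of_nonneg_left (hrow2 k') (sq_nonneg ‖d k'‖)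
      calc (1/2) * (‖d k'‖^2 * ∑ k ∈ K, ‖Wt T (μ k - μ k')‖)
          ≤ (1/2) * (‖d k'‖^2 * (M * (20*T + 64/T))) := by linarith
        _ = (1/2) * (M * (20*T + 64/T)) * ‖d k'‖^2 := by ring
    have hsplit : ∑ k ∈ K, ∑ k' ∈ K, ((1/2)*(‖d k‖^2 * ‖Wt T (μ k - μ k')‖) + (1/2)*(‖d k'‖^2 * ‖Wt T (μ k - μ k')‖))
        = (∑ k ∈ K, ∑ k' ∈ K, (1/2)*(‖d k‖^2 * ‖Wt T (μ k - μ k')‖))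
          + ∑ k ∈ K, ∑ k' ∈ K, (1/2)*(‖d k'‖^2 * ‖Wt T (μ k - μ k')‖) := by
      rw [← Finset.sum_add_distrib]
      apply Finset.sum_congr rfl
      intro k _
      rw [← Finset.sum_add_distrib]
    calc (∑ k ∈ K, ∑ k' ∈ K, (d k * conj (d k')) * Wt T (μ k - μ k')).re
        ≤ ∑ k ∈ K, ∑ k' ∈ K, ‖d k‖ * ‖d k'‖ * ‖Wt T (μ k - μ k')‖ := hre
      _ ≤ ∑ k ∈ K, ∑ k' ∈ K, ((1/2)*(‖d k‖^2 * ‖Wt T (μ k - μ k')‖) + (1/2)*(‖d k'‖^2 * ‖Wt T (μ k - μ k')‖)) :=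
          Finset.sum_le_sum hterm
      _ = _ := hsplit
      _ ≤ (1/2) * (M * (20*T + 64/T)) * (∑ k ∈ K, ‖d k‖^2) + (1/2) * (M * (20*T + 64/T)) * ∑ k ∈ K, ‖d k‖^2 :=
          add_le_add hS1 hS2
      _ = (20*T + 64/T) * M * ∑ k ∈ K, ‖d k‖^2 := by ring
  calc ∫ t in Set.Ioc (0:ℝ) T, ‖F t‖^2 ≤ ∫ t in Set.Ioc (0:ℝ) T, tri T t * ‖F t‖^2 := step1
    _ ≤ ∫ t : ℝ, tri T t * ‖F t‖^2 := step2
    _ = (∫ t : ℝ, G t).re := step3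
    _ = (∑ k ∈ K, ∑ k' ∈ K, (d k * conj (d k')) * Wt T (μ k - μ k')).re := by rw [step4]
    _ ≤ (20*T + 64/T) * M * ∑ k ∈ K, ‖d k‖^2 := step5

lemma int_exp_x (m : ℤ) : (∫ x in Set.Ioc (0:ℝ) (2*Real.pi), Complex.exp (Complex.I * (m:ℂ) * (x:ℂ)))
    = if m = 0 then ((2*Real.pi : ℝ):ℂ) else 0 := by
  have h2pi : (0:ℝ) ≤ 2*Real.pi := by positivity
  rw [← intervalIntegral.integral_of_le h2pi]
  by_cases hm : m = 0
  · subst hm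
    simp
  · have hc : (Complex.I * (m:ℂ)) ≠ 0 := by
      exact mul_ne_zero Complex.I_ne_zero (Int.cast_ne_zero.mpr hm)
    rw [if_neg hm]
    have := integral_exp_mul_complex (a := (0:ℝ)) (b := 2*Real.pi) hc
    have heq : ∀ x : ℝ, Complex.I * (m:ℂ) * (x:ℂ) = (Complex.I * (m:ℂ)) * (x:ℂ) := fun x => by ring
    rw [this]
    have h1 : Complex.exp (Complex.I * (m:ℂ) * ((2*Real.pi : ℝ):ℂ)) = 1 := by
      rw [show Complex.I * (m:ℂ) * ((2*Real.pi : ℝ):ℂ) = (m:ℂ) * (2*(Real.pi:ℂ)*Complex.I) by push_cast; ring]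
      exact Complex.exp_int_mul_two_pi_mul_I m
    rw [show ((0:ℝ):ℂ) = 0 by norm_num, mul_zero, Complex.exp_zero, h1]
    simp

lemma inner_x (S : Finset ℤ) (lam : ℤ → ℝ) (c : ℤ → ℂ) (t : ℝ) :
    (∫ x in Set.Ioc (0:ℝ) (2*Real.pi),
      ‖∑ n ∈ S, c n * Complex.exp (Complex.I * ((n:ℂ)*(x:ℂ) + ((lam n:ℝ):ℂ)*(t:ℂ)))‖^4)
    = 2*Real.pi * ∑ a ∈ (S ×ˢ S).image (fun p => p.1 + p.2),
        ‖∑ p ∈ (S ×ˢ S).filter (fun p => p.1 + p.2 = a),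
           (c p.1 * c p.2) * Complex.exp (Complex.I * ((lam p.1 + lam p.2 : ℝ):ℂ) * (t:ℂ))‖^2 := by
  classical
  set P := S ×ˢ S with hP
  set g : ℤ × ℤ → ℂ := fun p => (c p.1 * c p.2) * Complex.exp (Complex.I * ((lam p.1 + lam p.2 : ℝ):ℂ) * (t:ℂ)) with hg
  set u : ℝ → ℂ := fun x => ∑ n ∈ S, c n * Complex.exp (Complex.I * ((n:ℂ)*(x:ℂ) + ((lam n:ℝ):ℂ)*(t:ℂ))) with hu
  set V : ℝ → ℂ := fun x => ∑ p ∈ P, g p * Complex.exp (Complex.I * ((p.1 + p.2 : ℤ):ℂ) * (x:ℂ)) with hV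
  have husq : ∀ x : ℝ, u x ^ 2 = V x := by
    intro x
    simp only [hu, hV, hP, sq]
    rw [Finset.sum_mul_sum]
    rw [← Finset.sum_product']
    apply Finset.sum_congr rfl
    intro p _
    have h1 : c p.1 * Complex.exp (Complex.I * ((p.1:ℂ)*(x:ℂ) + ((lam p.1:ℝ):ℂ)*(t:ℂ)))
        * (c p.2 * Complex.exp (Complex.I * ((p.2:ℂ)*(x:ℂ) + ((lam p.2:ℝ):ℂ)*(t:ℂ))))
        = c p.1 * c p.2 * Complex.exp ((Complex.I * ((p.1:ℂ)*(x:ℂ) + ((lam p.1:ℝ):ℂ)*(t:ℂ)))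
            + (Complex.I * ((p.2:ℂ)*(x:ℂ) + ((lam p.2:ℝ):ℂ)*(t:ℂ)))) := by
      rw [Complex.exp_add]; ring
    have h2 : c p.1 * c p.2 * Complex.exp (Complex.I * ((lam p.1 + lam p.2 : ℝ):ℂ) * (t:ℂ))
        * Complex.exp (Complex.I * ((p.1 + p.2 : ℤ):ℂ) * (x:ℂ))
        = c p.1 * c p.2 * Complex.exp ((Complex.I * ((p.1:ℂ)*(x:ℂ) + ((lam p.1:ℝ):ℂ)*(t:ℂ)))
            + (Complex.I * ((p.2:ℂ)*(x:ℂ) + ((lam p.2:ℝ):ℂ)*(t:ℂ)))) := by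
      rw [mul_assoc, ← Complex.exp_add]
      rw [show Complex.I * ((lam p.1 + lam p.2 : ℝ):ℂ) * (t:ℂ) + Complex.I * ((p.1 + p.2 : ℤ):ℂ) * (x:ℂ)
          = (Complex.I * ((p.1:ℂ)*(x:ℂ) + ((lam p.1:ℝ):ℂ)*(t:ℂ)))
            + (Complex.I * ((p.2:ℂ)*(x:ℂ) + ((lam p.2:ℝ):ℂ)*(t:ℂ))) by push_cast; ring]
    exact h1.trans h2.symm
  have hnorm4 : ∀ x : ℝ, ‖u x‖^4 = (V x * conj (V x)).re := by
    intro x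
    rw [← husq x, Complex.mul_conj, Complex.normSq_eq_norm_sq, norm_pow,
      Complex.ofReal_re]
    ring
  have hVexp : ∀ x : ℝ, V x * conj (V x)
      = ∑ p ∈ P, ∑ q ∈ P, (g p * conj (g q)) * Complex.exp (Complex.I * ((p.1 + p.2 - (q.1 + q.2) : ℤ):ℂ) * (x:ℂ)) := by
    intro x
    simp only [hV]
    rw [map_sum, Finset.sum_mul_sum]
    apply Finset.sum_congr rfl
    intro p _
    apply Finset.sum_congr rfl
    intro q _
    rw [map_mul, ← Complex.exp_conj]
    have hconj : conj (Complex.I * ((q.1 + q.2 : ℤ):ℂ) * (x:ℂ)) = -(Complex.I * ((q.1 + q.2 : ℤ):ℂ) * (x:ℂ)) := by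
      simp [Complex.ext_iff]
    rw [hconj]
    rw [show Complex.I * ((p.1 + p.2 - (q.1 + q.2) : ℤ):ℂ) * (x:ℂ)
        = Complex.I * ((p.1 + p.2 : ℤ):ℂ) * (x:ℂ) + -(Complex.I * ((q.1 + q.2 : ℤ):ℂ) * (x:ℂ)) by push_cast; ring]
    rw [Complex.exp_add]
    ring
  -- integrate
  have hint : (∫ x in Set.Ioc (0:ℝ) (2*Real.pi), V x * conj (V x))
      = ∑ p ∈ P, ∑ q ∈ P, (g p * conj (g q)) * (if p.1 + p.2 - (q.1 + q.2) = 0 then ((2*Real.pi : ℝ):ℂ) else 0) := by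
    rw [setIntegral_congr_fun measurableSet_Ioc (fun x _ => hVexp x)]
    rw [integral_finset_sum]
    · apply Finset.sum_congr rfl
      intro p _
      rw [integral_finset_sum]
      · apply Finset.sum_congr rfl
        intro q _
        rw [integral_const_mul, int_exp_x]
      · intro q _
        apply Integrable.const_mul
        apply Continuous.integrableOn_Ioc
        exact (continuous_const.mul Complex.continuous_ofReal).cexp
    · intro p _
      apply integrable_finset_sum
      intro q _
      apply Integrable.const_mul
      apply Continuous.integrableOn_Ioc
      exact (continuous_const.mul Complex.continuous_ofReal).cexp
  have hVint : Integrable (fun x => V x * conj (V x)) (volume.restrict (Set.Ioc (0:ℝ) (2*Real.pi))) := by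
    apply Continuous.integrableOn_Ioc
    have hVcont : Continuous V := by
      apply continuous_finset_sum
      intro p _
      exact continuous_const.mul ((continuous_const.mul Complex.continuous_ofReal).cexp)
    exact hVcont.mul (Complex.continuous_conj.comp hVcont)
  have hLHS : (∫ x in Set.Ioc (0:ℝ) (2*Real.pi), ‖u x‖^4)
      = (∑ p ∈ P, ∑ q ∈ P, (g p * conj (g q)) * (if p.1 + p.2 - (q.1 + q.2) = 0 then ((2*Real.pi : ℝ):ℂ) else 0)).re := by
    rw [← hint]
    have h := integral_re hVint
    simp only [RCLike.re_to_complex] at h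
    rw [← h]
    apply setIntegral_congr_fun measurableSet_Ioc
    intro x _
    exact hnorm4 x
  rw [hLHS]
  -- regroup
  have hfib : ∑ p ∈ P, ∑ q ∈ P, (g p * conj (g q)) * (if p.1 + p.2 - (q.1 + q.2) = 0 then ((2*Real.pi : ℝ):ℂ) else 0)
      = ∑ a ∈ P.image (fun p => p.1 + p.2), ((2*Real.pi : ℝ):ℂ) *
          ((∑ p ∈ P.filter (fun p => p.1 + p.2 = a), g p) * conj (∑ p ∈ P.filter (fun p => p.1 + p.2 = a), g p)) := by
    rw [← Finset.sum_fiberwise_of_maps_to (g := fun p : ℤ × ℤ => p.1 + p.2)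
      (fun p hp => Finset.mem_image_of_mem _ hp)
      (fun p => ∑ q ∈ P, (g p * conj (g q)) * (if p.1 + p.2 - (q.1 + q.2) = 0 then ((2*Real.pi : ℝ):ℂ) else 0))]
    apply Finset.sum_congr rfl
    intro a _
    rw [map_sum, Finset.sum_mul_sum, Finset.mul_sum]
    apply Finset.sum_congr rfl
    intro p hp
    rw [Finset.mem_filter] at hp
    have hinner : ∀ q ∈ P, (g p * conj (g q)) * (if p.1 + p.2 - (q.1 + q.2) = 0 then ((2*Real.pi : ℝ):ℂ) else 0)
        = if q.1 + q.2 = a then ((2*Real.pi : ℝ):ℂ) * (g p * conj (g q)) else 0 := by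
      intro q _
      by_cases hqa : q.1 + q.2 = a
      · rw [if_pos hqa, if_pos (by omega : p.1 + p.2 - (q.1 + q.2) = 0)]
        ring
      · rw [if_neg hqa, if_neg (by omega : ¬ p.1 + p.2 - (q.1 + q.2) = 0), mul_zero]
    rw [Finset.sum_congr rfl hinner, Finset.mul_sum]
    exact (Finset.sum_filter _ _).symm
  rw [hfib, Complex.re_sum, Finset.mul_sum]
  apply Finset.sum_congr rfl
  intro a _
  rw [Complex.mul_conj, ← Complex.ofReal_mul, Complex.ofReal_re, Complex.normSq_eq_norm_sq]

/-- Reduction of the `L⁴` Strichartz estimate to a counting bound. -/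
theorem L4_strichartz_counting (α T : ℝ) (hα₁ : 1 < α) (hα₂ : α ≤ 2) (hT : 0 < T) :
    ∃ C > 0, ∀ (N : ℝ), 1 ≤ N → ∀ c : ℤ → ℂ, (Function.support c).Finite →
      (∀ n : ℤ, c n ≠ 0 → N ≤ |(n : ℝ)| ∧ |(n : ℝ)| ≤ 2 * N) →
      (∫ t in Set.Ioc (0 : ℝ) T, ∫ x in Set.Ioc (0 : ℝ) (2 * Real.pi),
          ‖∑' n : ℤ, c n *
              Complex.exp (Complex.I * ((n : ℂ) * (x : ℂ) + ((|(n : ℝ)| ^ α : ℝ) : ℂ) * (t : ℂ)))‖ ^ 4)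
          ^ ((1 : ℝ) / 2)
        ≤ C * (⨆ a : ℤ, ⨆ l : ℤ,
              (({k : ℤ | N ≤ |(k : ℝ)| ∧ |(k : ℝ)| ≤ 2 * N ∧
                  N ≤ |(a : ℝ) - (k : ℝ)| ∧ |(a : ℝ) - (k : ℝ)| ≤ 2 * N ∧
                  |(|(k : ℝ)| ^ α + |(a : ℝ) - (k : ℝ)| ^ α - (l : ℝ))| ≤ 1 / 2}.ncard : ℝ)))
            ^ ((1 : ℝ) / 2)
          * ∑' n : ℤ, ‖c n‖ ^ 2 := by
  classical
  have hC₀ : (0:ℝ) < 2*Real.pi*(20*T + 64/T) := by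
    have := Real.pi_pos
    have h1 : 0 < 20*T := by linarith
    have h2 : 0 < 64/T := by positivity
    nlinarith
  refine ⟨Real.sqrt (2*Real.pi*(20*T + 64/T)) + 1, by positivity, ?_⟩
  intro N hN c hfin hsupp
  set lam : ℤ → ℝ := fun n => |(n:ℝ)|^α with hlam
  set S : Finset ℤ := hfin.toFinset with hS
  have hmemS : ∀ n : ℤ, n ∈ S ↔ c n ≠ 0 := by
    intro n; rw [hS, Set.Finite.mem_toFinset, Function.mem_support]
  -- the A sets
  set A : ℤ → ℤ → Set ℤ := fun a l => {k : ℤ | N ≤ |(k : ℝ)| ∧ |(k : ℝ)| ≤ 2 * N ∧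
                  N ≤ |(a : ℝ) - (k : ℝ)| ∧ |(a : ℝ) - (k : ℝ)| ≤ 2 * N ∧
                  |(|(k : ℝ)| ^ α + |(a : ℝ) - (k : ℝ)| ^ α - (l : ℝ))| ≤ 1 / 2} with hA
  set Msup : ℝ := ⨆ a : ℤ, ⨆ l : ℤ, ((A a l).ncard : ℝ) with hMsup
  have hAsub : ∀ a l : ℤ, A a l ⊆ Set.Icc (-(⌈2*N⌉)) ⌈2*N⌉ := by
    intro a l k hk
    rw [hA] at hk
    obtain ⟨h1, h2, h3, h4, h5⟩ := hk
    rw [Set.mem_Icc]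
    rw [abs_le] at h2
    constructor
    · have : (-(⌈2*N⌉:ℤ):ℝ) ≤ (k:ℝ) := by
        push_cast
        have := Int.le_ceil (2*N)
        linarith [h2.1]
      exact_mod_cast this
    · have : (k:ℝ) ≤ ((⌈2*N⌉:ℤ):ℝ) := by
        have := Int.le_ceil (2*N)
        linarith [h2.2]
      exact_mod_cast this
  have hAfin : ∀ a l : ℤ, (A a l).Finite :=
    fun a l => (Set.finite_Icc _ _).subset (hAsub a l)
  set B : ℝ := (((Set.Icc (-(⌈2*N⌉)) ⌈2*N⌉ : Set ℤ)).ncard : ℝ) with hB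
  have hAcard : ∀ a l : ℤ, ((A a l).ncard : ℝ) ≤ B := by
    intro a l
    rw [hB]
    exact_mod_cast Set.ncard_le_ncard (hAsub a l) (Set.finite_Icc _ _)
  have hbdd1 : ∀ a : ℤ, BddAbove (Set.range fun l : ℤ => ((A a l).ncard : ℝ)) := by
    intro a
    refine ⟨B, ?_⟩
    rintro y ⟨l, rfl⟩
    exact hAcard a l
  have hbdd2 : BddAbove (Set.range fun a : ℤ => ⨆ l : ℤ, ((A a l).ncard : ℝ)) := by
    refine ⟨B, ?_⟩
    rintro y ⟨a, rfl⟩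
    exact ciSup_le (hAcard a)
  have hMle : ∀ a l : ℤ, ((A a l).ncard : ℝ) ≤ Msup := by
    intro a l
    refine le_trans (le_ciSup (hbdd1 a) l) ?_
    exact le_ciSup hbdd2 a
  have hM0 : 0 ≤ Msup := le_trans (Nat.cast_nonneg _) (hMle 0 0)
  -- rewrite tsums
  have hu : ∀ t x : ℝ, (∑' n : ℤ, c n *
        Complex.exp (Complex.I * ((n : ℂ) * (x : ℂ) + ((lam n : ℝ) : ℂ) * (t : ℂ))))
      = ∑ n ∈ S, c n * Complex.exp (Complex.I * ((n : ℂ) * (x : ℂ) + ((lam n : ℝ) : ℂ) * (t : ℂ))) := by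
    intro t x
    apply tsum_eq_sum
    intro n hn
    have : c n = 0 := by
      by_contra hc
      exact hn ((hmemS n).2 hc)
    rw [this, zero_mul]
  have hc2 : (∑' n : ℤ, ‖c n‖^2) = ∑ n ∈ S, ‖c n‖^2 := by
    apply tsum_eq_sum
    intro n hn
    have : c n = 0 := by
      by_contra hc
      exact hn ((hmemS n).2 hc)
    rw [this]
    simp
  -- abbreviations
  set P : Finset (ℤ × ℤ) := S ×ˢ S with hP
  set img : Finset ℤ := P.image (fun p => p.1 + p.2) with himg
  set f : ℤ → ℝ → ℂ := fun a t => ∑ p ∈ P.filter (fun p => p.1 + p.2 = a),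
      (c p.1 * c p.2) * Complex.exp (Complex.I * ((lam p.1 + lam p.2 : ℝ):ℂ) * (t:ℂ)) with hf
  set Sg2 : ℝ := ∑ n ∈ S, ‖c n‖^2 with hSg2
  have hSg2nonneg : 0 ≤ Sg2 := Finset.sum_nonneg (fun n _ => by positivity)
  -- counting hypothesis for each a
  have hMa : ∀ a : ℤ, ∀ l : ℤ,
      ((((P.filter (fun p => p.1 + p.2 = a)).filter fun p => |(lam p.1 + lam p.2) - (l:ℝ)| ≤ 1/2).card : ℝ))
        ≤ Msup := by
    intro a l
    set Q := ((P.filter (fun p => p.1 + p.2 = a)).filter fun p => |(lam p.1 + lam p.2) - (l:ℝ)| ≤ 1/2) with hQ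
    have hQmem : ∀ p ∈ Q, p.1 ∈ S ∧ p.2 ∈ S ∧ p.1 + p.2 = a ∧ |(lam p.1 + lam p.2) - (l:ℝ)| ≤ 1/2 := by
      intro p hp
      rw [hQ, Finset.mem_filter, Finset.mem_filter, hP, Finset.mem_product] at hp
      exact ⟨hp.1.1.1, hp.1.1.2, hp.1.2, hp.2⟩
    have hinj : Set.InjOn Prod.fst (Q : Set (ℤ × ℤ)) := by
      intro p hp q hq hpq
      have h1 := (hQmem p (by exact_mod_cast hp)).2.2.1
      have h2 := (hQmem q (by exact_mod_cast hq)).2.2.1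
      have : p.2 = q.2 := by omega
      exact Prod.ext hpq this
    have hcard : Q.card = (Q.image Prod.fst).card := (Finset.card_image_of_injOn hinj).symm
    have hsub : ((Q.image Prod.fst : Finset ℤ) : Set ℤ) ⊆ A a l := by
      intro k hk
      rw [Finset.coe_image, Set.mem_image] at hk
      obtain ⟨p, hp, rfl⟩ := hk
      have hp' := hQmem p (by exact_mod_cast hp)
      obtain ⟨hp1, hp2, hpa, hpl⟩ := hp'
      have hc1 : c p.1 ≠ 0 := (hmemS p.1).1 hp1
      have hc2' : c p.2 ≠ 0 := (hmemS p.2).1 hp2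
      have hb1 := hsupp p.1 hc1
      have hb2 := hsupp p.2 hc2'
      have hcast : ((p.2:ℤ):ℝ) = (a:ℝ) - (p.1:ℝ) := by
        have : p.2 = a - p.1 := by omega
        rw [this]; push_cast; ring
      rw [hA]
      refine ⟨hb1.1, hb1.2, ?_, ?_, ?_⟩
      · rw [← hcast]; exact hb2.1
      · rw [← hcast]; exact hb2.2
      · rw [← hcast]
        rw [hlam] at hpl
        exact hpl
    calc (Q.card : ℝ) = ((Q.image Prod.fst).card : ℝ) := by exact_mod_cast hcard
      _ = ((Q.image Prod.fst : Finset ℤ) : Set ℤ).ncard := by rw [Set.ncard_coe_finset]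
      _ ≤ ((A a l).ncard : ℝ) := by
          exact_mod_cast Set.ncard_le_ncard hsub (hAfin a l)
      _ ≤ Msup := hMle a l
  -- continuity of f a
  have hfcont : ∀ a : ℤ, Continuous (fun t => ‖f a t‖^2) := by
    intro a
    apply Continuous.pow
    apply Continuous.norm
    apply continuous_finset_sum
    intro p _
    exact continuous_const.mul ((continuous_const.mul Complex.continuous_ofReal).cexp)
  -- main inner rewrite
  have hJ1 : (∫ t in Set.Ioc (0 : ℝ) T, ∫ x in Set.Ioc (0 : ℝ) (2 * Real.pi),
        ‖∑ n ∈ S, c n * Complex.exp (Complex.I * ((n : ℂ) * (x : ℂ) + ((lam n : ℝ) : ℂ) * (t : ℂ)))‖ ^ 4)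
      = 2*Real.pi * ∑ a ∈ img, ∫ t in Set.Ioc (0:ℝ) T, ‖f a t‖^2 := by
    rw [setIntegral_congr_fun measurableSet_Ioc (fun t _ => inner_x S lam c t)]
    rw [integral_const_mul]
    congr 1
    rw [integral_finset_sum]
    intro a _
    exact (hfcont a).integrableOn_Ioc
  -- apply core lemma
  have hJ2 : ∀ a : ℤ, (∫ t in Set.Ioc (0:ℝ) T, ‖f a t‖^2)
      ≤ (20*T + 64/T) * Msup * ∑ p ∈ P.filter (fun p => p.1 + p.2 = a), ‖c p.1 * c p.2‖^2 := by
    intro a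
    exact core_lemma T hT (P.filter (fun p => p.1 + p.2 = a))
      (fun p => c p.1 * c p.2) (fun p => lam p.1 + lam p.2) Msup (hMa a)
  have hsumsq : ∑ a ∈ img, ∑ p ∈ P.filter (fun p => p.1 + p.2 = a), ‖c p.1 * c p.2‖^2
      = Sg2^2 := by
    rw [Finset.sum_fiberwise_of_maps_to (fun p hp => Finset.mem_image_of_mem _ hp)]
    rw [hSg2, sq, Finset.sum_mul_sum, hP, ← Finset.sum_product']
    apply Finset.sum_congr rfl
    intro p _
    rw [norm_mul, mul_pow]
  have hJint : ∀ a ∈ img, IntegrableOn (fun t => ‖f a t‖^2) (Set.Ioc (0:ℝ) T) volume :=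
    fun a _ => (hfcont a).integrableOn_Ioc
  have hJbound : (∫ t in Set.Ioc (0 : ℝ) T, ∫ x in Set.Ioc (0 : ℝ) (2 * Real.pi),
        ‖∑ n ∈ S, c n * Complex.exp (Complex.I * ((n : ℂ) * (x : ℂ) + ((lam n : ℝ) : ℂ) * (t : ℂ)))‖ ^ 4)
      ≤ (2*Real.pi*(20*T + 64/T)) * Msup * Sg2^2 := by
    rw [hJ1]
    have h1 : ∑ a ∈ img, ∫ t in Set.Ioc (0:ℝ) T, ‖f a t‖^2
        ≤ (20*T + 64/T) * Msup * Sg2^2 := by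
      rw [← hsumsq, Finset.mul_sum]
      exact Finset.sum_le_sum (fun a _ => hJ2 a)
    have hpi : (0:ℝ) < 2*Real.pi := by positivity
    calc 2*Real.pi * ∑ a ∈ img, ∫ t in Set.Ioc (0:ℝ) T, ‖f a t‖^2
        ≤ 2*Real.pi * ((20*T + 64/T) * Msup * Sg2^2) := by
          apply mul_le_mul_of_nonneg_left h1 (le_of_lt hpi)
      _ = (2*Real.pi*(20*T + 64/T)) * Msup * Sg2^2 := by ring
  -- put together
  have hJnonneg : 0 ≤ (∫ t in Set.Ioc (0 : ℝ) T, ∫ x in Set.Ioc (0 : ℝ) (2 * Real.pi),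
        ‖∑ n ∈ S, c n * Complex.exp (Complex.I * ((n : ℂ) * (x : ℂ) + ((lam n : ℝ) : ℂ) * (t : ℂ)))‖ ^ 4) := by
    apply setIntegral_nonneg measurableSet_Ioc
    intro t _
    apply setIntegral_nonneg measurableSet_Ioc
    intro x _
    positivity
  have hgoal_eq : (∫ t in Set.Ioc (0 : ℝ) T, ∫ x in Set.Ioc (0 : ℝ) (2 * Real.pi),
          ‖∑' n : ℤ, c n *
              Complex.exp (Complex.I * ((n : ℂ) * (x : ℂ) + ((|(n : ℝ)| ^ α : ℝ) : ℂ) * (t : ℂ)))‖ ^ 4)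
      = (∫ t in Set.Ioc (0 : ℝ) T, ∫ x in Set.Ioc (0 : ℝ) (2 * Real.pi),
        ‖∑ n ∈ S, c n * Complex.exp (Complex.I * ((n : ℂ) * (x : ℂ) + ((lam n : ℝ) : ℂ) * (t : ℂ)))‖ ^ 4) := by
    apply setIntegral_congr_fun measurableSet_Ioc
    intro t _
    apply setIntegral_congr_fun measurableSet_Ioc
    intro x _
    simp only [hlam]
    have h := hu t x
    simp only [hlam] at h
    rw [h]
  rw [hgoal_eq, hc2]
  have hfinal : ((∫ t in Set.Ioc (0 : ℝ) T, ∫ x in Set.Ioc (0 : ℝ) (2 * Real.pi),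
        ‖∑ n ∈ S, c n * Complex.exp (Complex.I * ((n : ℂ) * (x : ℂ) + ((lam n : ℝ) : ℂ) * (t : ℂ)))‖ ^ 4))
          ^ ((1:ℝ)/2)
      ≤ ((2*Real.pi*(20*T + 64/T)) * Msup * Sg2^2) ^ ((1:ℝ)/2) :=
    Real.rpow_le_rpow hJnonneg hJbound (by norm_num)
  refine le_trans hfinal ?_
  have hsplit : ((2*Real.pi*(20*T + 64/T)) * Msup * Sg2^2) ^ ((1:ℝ)/2)
      = (2*Real.pi*(20*T + 64/T)) ^ ((1:ℝ)/2) * Msup ^ ((1:ℝ)/2) * Sg2 := by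
    rw [Real.mul_rpow (by positivity) (by positivity), Real.mul_rpow (le_of_lt hC₀) hM0]
    congr 1
    rw [← Real.rpow_natCast Sg2 2, ← Real.rpow_mul hSg2nonneg]
    norm_num
  rw [hsplit]
  have hle1 : (2*Real.pi*(20*T + 64/T)) ^ ((1:ℝ)/2) ≤ Real.sqrt (2*Real.pi*(20*T + 64/T)) + 1 := by
    rw [← Real.sqrt_eq_rpow]
    linarith [Real.sqrt_nonneg (2*Real.pi*(20*T + 64/T))]
  have hmul : 0 ≤ Msup ^ ((1:ℝ)/2) * Sg2 := by positivity
  calc (2*Real.pi*(20*T + 64/T)) ^ ((1:ℝ)/2) * Msup ^ ((1:ℝ)/2) * Sg2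
      = (2*Real.pi*(20*T + 64/T)) ^ ((1:ℝ)/2) * (Msup ^ ((1:ℝ)/2) * Sg2) := by ring
    _ ≤ (Real.sqrt (2*Real.pi*(20*T + 64/T)) + 1) * (Msup ^ ((1:ℝ)/2) * Sg2) :=
        mul_le_mul_of_nonneg_right hle1 hmul
    _ = (Real.sqrt (2*Real.pi*(20*T + 64/T)) + 1) * Msup ^ ((1:ℝ)/2) * Sg2 := by ring
end

section
/- Let 1/2 < α ≤ 1. There exist constants C, c, c₀ > 0 and M₀ ≥ 1, depending only on α, such that the following holds. Let (Ω,ℱ,ℙ) be a probability space carrying families (h_n)_{n∈ℤ}, (l_n)_{n∈ℤ} of real random variables such that the combined family {h_n : n∈ℤ} ∪ {l_n : n∈ℤ} is independent and each variable has standard Gaussian law N(0,1). For integers M₀ ≤ M < N define S(ω) := ∑_{M < |n| ≤ N} (1+|n|^α)^{−1} · ((h_n(ω)² + l_n(ω)²)/2 − 1). Then for every λ > 0: if λ ≥ c₀ M^{1−α} then ℙ(|S| > λ) ≤ C exp(−c λ M^α), and if λ ≤ c₀ M^{1−α} then ℙ(|S| > λ) ≤ C exp(−c λ² M^{2α−1}).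 -/
open MeasureTheory ProbabilityTheory Real
open scoped NNReal ENNReal


lemma aux_exp_bound {u : ℝ} (hu : |u| ≤ 1/2) :
    Real.exp (-u/2) * (Real.sqrt (1-u))⁻¹ ≤ Real.exp (u^2) := by
  have hu1 : -(1/2) ≤ u := neg_le_of_abs_le hu
  have hu2 : u ≤ 1/2 := le_of_abs_le hu
  have h1u : (0:ℝ) < 1 - u := by linarith
  have hs : 0 < Real.sqrt (1-u) := Real.sqrt_pos.mpr h1u
  have he : 1 + (2*u^2+u)/2 ≤ Real.exp ((2*u^2+u)/2) := by
    have := Real.add_one_le_exp ((2*u^2+u)/2); linarith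
  have hesq : Real.exp ((2*u^2+u)/2) ^ 2 = Real.exp (2*u^2+u) := by
    rw [sq, ← Real.exp_add]; norm_num
  have h2 : (1 + (2*u^2+u)/2)^2 ≤ Real.exp (2*u^2+u) := by
    rw [← hesq]
    exact pow_le_pow_left₀ (by nlinarith) he 2
  have hpoly : 1 ≤ (1-u)*(1 + (2*u^2+u)/2)^2 := by
    nlinarith [mul_nonneg (sq_nonneg u) (by linarith : (0:ℝ) ≤ 1/2 - u),
      mul_nonneg (mul_nonneg (sq_nonneg u) (sq_nonneg u)) (by linarith : (0:ℝ) ≤ 1/2 - u),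
      mul_nonneg (mul_nonneg (sq_nonneg u) (by linarith : (0:ℝ) ≤ 1/2 - u)) (by linarith : (0:ℝ) ≤ 1/2 + u)]
  have hkey : 1 ≤ (1-u) * Real.exp (2*u^2+u) :=
    hpoly.trans (mul_le_mul_of_nonneg_left h2 h1u.le)
  have hx2 : (Real.sqrt (1-u) * Real.exp (u^2+u/2))^2 = (1-u) * Real.exp (2*u^2+u) := by
    rw [mul_pow, Real.sq_sqrt h1u.le, sq, ← Real.exp_add,
      show u^2+u/2+(u^2+u/2) = 2*u^2+u by ring]
  have hxpos : 0 < Real.sqrt (1-u) * Real.exp (u^2+u/2) := by positivity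
  have hx1 : 1 ≤ Real.sqrt (1-u) * Real.exp (u^2+u/2) := by nlinarith [hx2, hkey, hxpos]
  rw [mul_inv_le_iff₀ hs]
  calc Real.exp (-u/2) = Real.exp (-u/2) * 1 := by ring
    _ ≤ Real.exp (-u/2) * (Real.sqrt (1-u) * Real.exp (u^2+u/2)) :=
        mul_le_mul_of_nonneg_left hx1 (Real.exp_pos _).le
    _ = Real.exp (-u/2) * Real.exp (u^2+u/2) * Real.sqrt (1-u) := by ring
    _ = Real.exp (u^2) * Real.sqrt (1-u) := by
        rw [← Real.exp_add, show -u/2 + (u^2+u/2) = u^2 by ring]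


lemma aux_density_form (s : ℝ) (x : ℝ) :
    gaussianPDFReal 0 1 x * Real.exp (s * x^2)
      = (Real.sqrt (2*π))⁻¹ * Real.exp (-(1/2 - s) * x^2) := by
  rw [gaussianPDFReal]
  simp only [NNReal.coe_one, mul_one, sub_zero]
  rw [mul_assoc, ← Real.exp_add, show -x^2/2 + s*x^2 = -(1/2-s)*x^2 by ring]

lemma aux_gauss_meas : Measurable fun x => Real.toNNReal (gaussianPDFReal 0 1 x) :=
  (measurable_gaussianPDFReal 0 1).real_toNNReal

lemma aux_gauss_wd : gaussianReal 0 1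
    = (volume : Measure ℝ).withDensity (fun x => ((Real.toNNReal (gaussianPDFReal 0 1 x) : ℝ≥0) : ℝ≥0∞)) := by
  rw [gaussianReal_of_var_ne_zero 0 one_ne_zero]; rfl

lemma aux_gauss_density (g : ℝ → ℝ) :
    ∫ x, g x ∂(gaussianReal 0 1) = ∫ x, gaussianPDFReal 0 1 x * g x := by
  rw [aux_gauss_wd, integral_withDensity_eq_integral_smul aux_gauss_meas]
  congr 1; funext x
  simp [NNReal.smul_def, Real.coe_toNNReal _ (gaussianPDFReal_nonneg 0 1 x)]

lemma aux_gaussian_sq_integrable {s : ℝ} (hs : s < 1/2) :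
    Integrable (fun x => Real.exp (s * x^2)) (gaussianReal 0 1) := by
  rw [aux_gauss_wd, integrable_withDensity_iff_integrable_smul aux_gauss_meas]
  have : (fun x => (Real.toNNReal (gaussianPDFReal 0 1 x) : ℝ≥0) • Real.exp (s * x^2))
      = fun x => (Real.sqrt (2*π))⁻¹ * Real.exp (-(1/2 - s) * x^2) := by
    funext x
    rw [NNReal.smul_def, smul_eq_mul, Real.coe_toNNReal _ (gaussianPDFReal_nonneg 0 1 x),
      aux_density_form]
  rw [this]
  exact (integrable_exp_neg_mul_sq (by linarith)).const_mul _

lemma aux_gaussian_sq_integral {s : ℝ} (hs : s < 1/2) :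
    ∫ x, Real.exp (s * x^2) ∂(gaussianReal 0 1) = (Real.sqrt (1 - 2*s))⁻¹ := by
  rw [aux_gauss_density]
  have : ∀ x : ℝ, gaussianPDFReal 0 1 x * Real.exp (s * x^2)
      = (Real.sqrt (2*π))⁻¹ * Real.exp (-(1/2 - s) * x^2) := aux_density_form s
  rw [funext this, integral_const_mul]
  rw [integral_gaussian (1/2 - s)]
  have hq : (0:ℝ) < 1/2 - s := by linarith
  have hπ : (0:ℝ) < π := Real.pi_pos
  have h2 : (0:ℝ) < Real.sqrt 2 := Real.sqrt_pos.mpr (by norm_num)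
  have hqs : (0:ℝ) < Real.sqrt (1/2-s) := Real.sqrt_pos.mpr hq
  have hπs : (0:ℝ) < Real.sqrt π := Real.sqrt_pos.mpr hπ
  rw [Real.sqrt_div hπ.le, Real.sqrt_mul (by norm_num : (0:ℝ) ≤ 2) π,
    show (1:ℝ) - 2*s = 2*(1/2-s) by ring, Real.sqrt_mul (by norm_num : (0:ℝ) ≤ 2)]
  field_simp


lemma aux_mgf_term {Ω : Type} [MeasurableSpace Ω] {P : Measure Ω} [IsProbabilityMeasure P]
    {X : Ω → ℝ} (hX : Measurable X) (hmap : Measure.map X P = gaussianReal 0 1)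
    {b t : ℝ} (hu : |t * b| ≤ 1/2) :
    Integrable (fun ω => Real.exp (t * (b * ((X ω)^2 - 1)/2))) P ∧
    mgf (fun ω => b * ((X ω)^2 - 1)/2) P t ≤ Real.exp ((t*b)^2) := by
  set u := t * b with hu_def
  have hs : u/2 < 1/2 := by
    have := le_of_abs_le hu; linarith
  have hgm : AEStronglyMeasurable (fun x => Real.exp (u/2 * x^2)) (Measure.map X P) := by
    apply Measurable.aestronglyMeasurable; fun_prop
  have hint0 : Integrable (fun x => Real.exp (u/2 * x^2)) (Measure.map X P) := by
    rw [hmap]; exact aux_gaussian_sq_integrable hs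
  have hint : Integrable (fun ω => Real.exp (u/2 * (X ω)^2)) P :=
    (integrable_map_measure hgm hX.aemeasurable).mp hint0
  have hfun : (fun ω => Real.exp (t * (b * ((X ω)^2 - 1)/2)))
      = fun ω => Real.exp (-u/2) * Real.exp (u/2 * (X ω)^2) := by
    funext ω
    rw [← Real.exp_add, show -u/2 + u/2 * (X ω)^2 = t * (b * ((X ω)^2 - 1)/2) by
      rw [hu_def]; ring]
  have hintf : Integrable (fun ω => Real.exp (t * (b * ((X ω)^2 - 1)/2))) P := by
    rw [hfun]; exact hint.const_mul _
  refine ⟨hintf, ?_⟩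
  have hmgf : mgf (fun ω => b * ((X ω)^2 - 1)/2) P t
      = Real.exp (-u/2) * (Real.sqrt (1-u))⁻¹ := by
    rw [mgf]
    calc ∫ ω, Real.exp (t * (b * ((X ω)^2 - 1)/2)) ∂P
        = ∫ ω, Real.exp (-u/2) * Real.exp (u/2 * (X ω)^2) ∂P := by rw [hfun]
      _ = Real.exp (-u/2) * ∫ ω, Real.exp (u/2 * (X ω)^2) ∂P := integral_const_mul _ _
      _ = Real.exp (-u/2) * ∫ x, Real.exp (u/2 * x^2) ∂(Measure.map X P) := by
          rw [integral_map hX.aemeasurable hgm]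
      _ = Real.exp (-u/2) * (Real.sqrt (1-u))⁻¹ := by
          rw [hmap, aux_gaussian_sq_integral hs]
          norm_num
          rw [show 1 - 2*(u/2) = 1 - u by ring]
  rw [hmgf]
  exact aux_exp_bound hu


lemma aux_step {β : ℝ} (hβ0 : 0 < β) (hβ1 : β ≤ 1) {x : ℝ} (hx : 1 ≤ x) :
    β * (x+1)^(-(β+1)) ≤ x^(-β) - (x+1)^(-β) := by
  set y := x + 1 with hy_def
  have hy2 : (2:ℝ) ≤ y := by simp [hy_def]; linarith
  have hy0 : (0:ℝ) < y := by linarith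
  have hx0 : (0:ℝ) < x := by linarith
  have hxy0 : (0:ℝ) < x / y := by positivity
  have hbern : (x/y)^β ≤ 1 - β/y := by
    have h := rpow_one_add_le_one_add_mul_self (s := -(1/y)) (p := β)
      (by rw [neg_le_neg_iff]; rw [div_le_one hy0]; linarith) hβ0.le hβ1
    have h1 : 1 + -(1/y) = x/y := by field_simp; linarith
    have h2 : 1 + β * -(1/y) = 1 - β/y := by ring
    rwa [h1, h2] at h
  set p := (x/y)^β with hp_def
  have hp0 : (0:ℝ) < p := Real.rpow_pos_of_pos hxy0 β
  have hβy : β/y < 1 := by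
    rw [div_lt_one hy0]; linarith
  have hinv : 1 + β/y ≤ p⁻¹ := by
    rw [← one_div, le_div_iff₀ hp0]
    have hq : (0:ℝ) ≤ β/y := by positivity
    nlinarith [hbern, hq]
  -- x^(-β) = p⁻¹ * y^(-β)
  have hxrw : x^(-β) = p⁻¹ * y^(-β) := by
    rw [hp_def, ← Real.rpow_neg hxy0.le, ← Real.mul_rpow hxy0.le hy0.le,
      div_mul_cancel₀ _ hy0.ne']
  have hyb0 : (0:ℝ) < y^(-β) := Real.rpow_pos_of_pos hy0 _
  have hysplit : y^(-(β+1)) = y^(-β) * y⁻¹ := by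
    rw [show -(β+1) = -β + (-1) by ring, Real.rpow_add hy0, Real.rpow_neg_one]
  have hge : y^(-β) + β * (y^(-β) * y⁻¹) ≤ x^(-β) := by
    rw [hxrw]
    have : (1 + β/y) * y^(-β) ≤ p⁻¹ * y^(-β) :=
      mul_le_mul_of_nonneg_right hinv hyb0.le
    calc y^(-β) + β * (y^(-β) * y⁻¹) = (1 + β/y) * y^(-β) := by
          field_simp
      _ ≤ p⁻¹ * y^(-β) := this
  rw [hysplit]
  linarith

lemma aux_sum_rpow {β : ℝ} (hβ0 : 0 < β) (hβ1 : β ≤ 1) {M : ℤ} (hM : 1 ≤ M) :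
    ∀ N : ℤ, M ≤ N → ∑ m ∈ Finset.Icc (M+1) N, ((m:ℝ))^(-(β+1)) ≤ (M:ℝ)^(-β)/β := by
  have key : ∀ N : ℤ, M ≤ N →
      ∑ m ∈ Finset.Icc (M+1) N, ((m:ℝ))^(-(β+1)) ≤ ((M:ℝ)^(-β) - (N:ℝ)^(-β))/β := by
    refine Int.le_induction ?_ ?_
    · rw [Finset.Icc_eq_empty (by omega)]
      simp
    · intro N hMN ih
      have hins : Finset.Icc (M+1) (N+1) = insert (N+1) (Finset.Icc (M+1) N) := by
        ext m; simp only [Finset.mem_Icc, Finset.mem_insert]; omega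
      have hnot : (N+1) ∉ Finset.Icc (M+1) N := by
        simp only [Finset.mem_Icc]; omega
      rw [hins, Finset.sum_insert hnot]
      have hN1 : (1:ℝ) ≤ (N:ℝ) := by exact_mod_cast le_trans hM hMN
      have hstep := aux_step hβ0 hβ1 hN1
      have hcast : ((N+1:ℤ):ℝ) = (N:ℝ)+1 := by push_cast; ring
      rw [hcast]
      have h2 : ((N:ℝ)+1)^(-(β+1)) ≤ ((N:ℝ)^(-β) - ((N:ℝ)+1)^(-β))/β := by
        rw [le_div_iff₀ hβ0]; linarith
      calc ((N:ℝ)+1)^(-(β+1)) + ∑ m ∈ Finset.Icc (M+1) N, ((m:ℝ))^(-(β+1))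
          ≤ ((N:ℝ)^(-β) - ((N:ℝ)+1)^(-β))/β + ((M:ℝ)^(-β) - (N:ℝ)^(-β))/β := by
            exact add_le_add h2 ih
        _ = ((M:ℝ)^(-β) - ((N:ℝ)+1)^(-β))/β := by ring
  intro N hN
  refine (key N hN).trans ?_
  have hN0 : (0:ℝ) ≤ (N:ℝ) := by
    have : (1:ℤ) ≤ N := le_trans hM hN
    exact_mod_cast le_trans zero_le_one this
  have hNpos : (0:ℝ) ≤ (N:ℝ)^(-β) := Real.rpow_nonneg hN0 _
  have h : ((M:ℝ)^(-β) - (N:ℝ)^(-β))/β ≤ (M:ℝ)^(-β)/β := by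
    gcongr
    linarith
  linarith


set_option maxHeartbeats 2000000 in
/-- Large deviation estimate for the renormalized mass differences `b_N - b_M`. -/
theorem large_deviation_mass (α : ℝ) (hα₁ : 1 / 2 < α) (hα₂ : α ≤ 1) :
    ∃ C > 0, ∃ c > 0, ∃ c₀ > 0, ∃ M₀ : ℤ, 1 ≤ M₀ ∧
      ∀ (Ω : Type) [MeasurableSpace Ω] (P : Measure Ω) [IsProbabilityMeasure P]
        (h l : ℤ → Ω → ℝ),
        (∀ n, Measurable (h n)) → (∀ n, Measurable (l n)) →
        iIndepFun (Sum.elim h l) P →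
        (∀ n, Measure.map (h n) P = gaussianReal 0 1) →
        (∀ n, Measure.map (l n) P = gaussianReal 0 1) →
        ∀ M N : ℤ, M₀ ≤ M → M < N →
        ∀ lam : ℝ, 0 < lam →
          (c₀ * (M : ℝ) ^ (1 - α) ≤ lam →
            P {ω | lam < |∑ n ∈ (Finset.Icc (-N) N).filter (fun n => M < |n|),
                (1 + |(n : ℝ)| ^ α)⁻¹ * ((h n ω ^ 2 + l n ω ^ 2) / 2 - 1)|}
              ≤ ENNReal.ofReal (C * Real.exp (-c * lam * (M : ℝ) ^ α))) ∧
          (lam ≤ c₀ * (M : ℝ) ^ (1 - α) →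
            P {ω | lam < |∑ n ∈ (Finset.Icc (-N) N).filter (fun n => M < |n|),
                (1 + |(n : ℝ)| ^ α)⁻¹ * ((h n ω ^ 2 + l n ω ^ 2) / 2 - 1)|}
              ≤ ENNReal.ofReal (C * Real.exp (-c * lam ^ 2 * (M : ℝ) ^ (2 * α - 1)))) := by
  obtain ⟨β, hβ_def⟩ : ∃ β : ℝ, β = 2 * α - 1 := ⟨_, rfl⟩
  have hβ0 : 0 < β := by rw [hβ_def]; linarith
  have hβ1 : β ≤ 1 := by rw [hβ_def]; linarith
  have hα0 : 0 < α := by linarith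
  refine ⟨2, by norm_num, β/16, by positivity, 4/β, by positivity, 1, le_refl 1, ?_⟩
  intro Ω mΩ P hP h l hmh hml hindep hgh hgl M N hM hMN lam hlam
  -- basic facts about M
  have hM1 : (1:ℝ) ≤ (M:ℝ) := by exact_mod_cast hM
  have hMr : (0:ℝ) < (M:ℝ) := by linarith
  -- rpow arithmetic helper
  have hmul : ∀ p q : ℝ, (M:ℝ)^p * (M:ℝ)^q = (M:ℝ)^(p+q) :=
    fun p q => (Real.rpow_add hMr p q).symm
  have hA1 : (1:ℝ) ≤ (M:ℝ)^α := Real.one_le_rpow hM1 hα0.le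
  have hApos : (0:ℝ) < (M:ℝ)^α := by linarith
  have hDpos : (0:ℝ) < (M:ℝ)^(1-2*α) := Real.rpow_pos_of_pos hMr _
  set s : Finset ℤ := (Finset.Icc (-N) N).filter (fun n => M < |n|) with hs_def
  set a : ℤ → ℝ := fun n => (1 + |(n:ℝ)|^α)⁻¹ with ha_def
  set F : Ω → ℝ := fun ω => ∑ n ∈ s, a n * ((h n ω ^ 2 + l n ω ^ 2) / 2 - 1) with hF_def
  -- facts about a on s
  have hs_abs : ∀ n ∈ s, (M:ℝ) + 1 ≤ |(n:ℝ)| := by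
    intro n hn
    rw [hs_def, Finset.mem_filter] at hn
    have : M + 1 ≤ |n| := hn.2
    calc (M:ℝ) + 1 = ((M+1 : ℤ) : ℝ) := by push_cast; ring
      _ ≤ ((|n| : ℤ) : ℝ) := by exact_mod_cast this
      _ = |(n:ℝ)| := by push_cast; ring
  have ha_pos : ∀ n : ℤ, 0 < a n := by
    intro n
    have : (0:ℝ) ≤ |(n:ℝ)|^α := Real.rpow_nonneg (abs_nonneg _) _
    rw [ha_def]
    positivity
  have ha_le : ∀ n ∈ s, a n ≤ ((M:ℝ)^α)⁻¹ := by
    intro n hn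
    have h1 : (M:ℝ) ≤ |(n:ℝ)| := by linarith [hs_abs n hn]
    have h2 : (M:ℝ)^α ≤ |(n:ℝ)|^α := Real.rpow_le_rpow hMr.le h1 hα0.le
    have h3 : (M:ℝ)^α ≤ 1 + |(n:ℝ)|^α := by linarith
    rw [ha_def]
    exact inv_anti₀ hApos h3
  -- variance-type bound
  have hVbound : ∑ n ∈ s, (a n)^2 ≤ 2/β * (M:ℝ)^(1-2*α) := by
    have hstep1 : ∑ n ∈ s, (a n)^2 ≤ ∑ n ∈ s, |(n:ℝ)|^(-(β+1)) := by
      apply Finset.sum_le_sum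
      intro n hn
      have hn0 : (0:ℝ) < |(n:ℝ)| := by linarith [hs_abs n hn, hM1]
      have hx0 : (0:ℝ) < |(n:ℝ)|^α := Real.rpow_pos_of_pos hn0 _
      have h1 : a n ≤ (|(n:ℝ)|^α)⁻¹ := by
        rw [ha_def]
        apply inv_anti₀ hx0
        linarith
      have h2 : (a n)^2 ≤ ((|(n:ℝ)|^α)⁻¹)^2 :=
        pow_le_pow_left₀ (ha_pos n).le h1 2
      refine h2.trans_eq ?_
      rw [← Real.rpow_neg hn0.le, sq, ← Real.rpow_add hn0,
        show -α + -α = -(β+1) by rw [hβ_def]; ring]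
    have hunion : s = Finset.Icc (M+1) N ∪ Finset.Icc (-N) (-(M+1)) := by
      ext n
      simp only [hs_def, Finset.mem_filter, Finset.mem_Icc, Finset.mem_union, lt_abs]
      omega
    have hdisj : Disjoint (Finset.Icc (M+1) N) (Finset.Icc (-N) (-(M+1))) := by
      rw [Finset.disjoint_left]
      intro n hn1 hn2
      simp only [Finset.mem_Icc] at hn1 hn2
      omega
    have hneg : ∑ n ∈ Finset.Icc (-N) (-(M+1)), |(n:ℝ)|^(-(β+1))
        = ∑ m ∈ Finset.Icc (M+1) N, |(m:ℝ)|^(-(β+1)) := by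
      refine Finset.sum_nbij' (fun n => -n) (fun m => -m) ?_ ?_ ?_ ?_ ?_
      · intro x hx; simp only [Finset.mem_Icc] at hx ⊢; omega
      · intro x hx; simp only [Finset.mem_Icc] at hx ⊢; omega
      · intro x _; ring
      · intro x _; ring
      · intro x _; push_cast; rw [abs_neg]
    have habs_eq : ∀ m ∈ Finset.Icc (M+1) N, |(m:ℝ)|^(-(β+1)) = ((m:ℝ))^(-(β+1)) := by
      intro m hm
      simp only [Finset.mem_Icc] at hm
      have hm0 : (0:ℝ) < (m:ℝ) := by exact_mod_cast (by omega : (0:ℤ) < m)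
      rw [abs_of_pos hm0]
    have hsum2 : ∑ n ∈ s, |(n:ℝ)|^(-(β+1))
        = 2 * ∑ m ∈ Finset.Icc (M+1) N, ((m:ℝ))^(-(β+1)) := by
      rw [hunion, Finset.sum_union hdisj, hneg, Finset.sum_congr rfl habs_eq]
      ring
    have hfin := aux_sum_rpow hβ0 hβ1 hM N hMN.le
    calc ∑ n ∈ s, (a n)^2 ≤ ∑ n ∈ s, |(n:ℝ)|^(-(β+1)) := hstep1
      _ = 2 * ∑ m ∈ Finset.Icc (M+1) N, ((m:ℝ))^(-(β+1)) := hsum2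
      _ ≤ 2 * ((M:ℝ)^(-β)/β) := by linarith [hfin]
      _ = 2/β * (M:ℝ)^(1-2*α) := by
          rw [show -β = 1-2*α by rw [hβ_def]; ring]; ring
  -- the key Chernoff estimate
  have key : ∀ t : ℝ, 0 < t → t ≤ (M:ℝ)^α / 2 →
      P {ω | lam < |F ω|}
        ≤ ENNReal.ofReal (2 * Real.exp (-(t*lam) + t^2 * (4/β) * (M:ℝ)^(1-2*α))) := by
    intro t ht0 htle
    have hta : ∀ n ∈ s, t * a n ≤ 1/2 := by
      intro n hn
      have h1 := ha_le n hn
      have h2 : t * a n ≤ ((M:ℝ)^α/2) * ((M:ℝ)^α)⁻¹ :=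
        mul_le_mul htle h1 (ha_pos n).le (by positivity)
      have h3 : ((M:ℝ)^α/2) * ((M:ℝ)^α)⁻¹ = 1/2 := by
        field_simp
      linarith
    have chern : ∀ ε : ℝ, ε = 1 ∨ ε = -1 →
        P {ω | lam ≤ ε * F ω}
          ≤ ENNReal.ofReal (Real.exp (-(t*lam) + t^2 * (4/β) * (M:ℝ)^(1-2*α))) := by
      intro ε hε
      have hε1 : |ε| = 1 := by rcases hε with rfl | rfl <;> simp
      have hε2 : ε^2 = 1 := by rcases hε with rfl | rfl <;> norm_num
      have hu : ∀ n ∈ s, |t * (ε * a n)| ≤ 1/2 := by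
        intro n hn
        rw [abs_mul, abs_mul, hε1, abs_of_pos ht0, abs_of_pos (ha_pos n), one_mul]
        exact hta n hn
      set φ : ℤ ⊕ ℤ → ℝ → ℝ := Sum.elim (fun n x => (ε * a n) * (x^2 - 1)/2)
        (fun n x => (ε * a n) * (x^2 - 1)/2) with hφ_def
      set f : ℤ ⊕ ℤ → Ω → ℝ := fun k => φ k ∘ Sum.elim h l k with hf_def
      have hφm : ∀ k, Measurable (φ k) := by
        intro k
        rcases k with n | n <;>
          exact (((measurable_id.pow_const 2).sub_const 1).const_mul _).div_const 2
      have hfm : ∀ k, Measurable (f k) := by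
        intro k
        rcases k with n | n
        · exact (hφm (Sum.inl n)).comp (hmh n)
        · exact (hφm (Sum.inr n)).comp (hml n)
      have hf_indep : iIndepFun f P := hindep.comp φ hφm
      have hint_k : ∀ k ∈ s.disjSum s, Integrable (fun ω => Real.exp (t * f k ω)) P := by
        intro k hk
        rcases k with n | n
        · rw [Finset.inl_mem_disjSum] at hk
          exact (aux_mgf_term (hmh n) (hgh n) (hu n hk)).1
        · rw [Finset.inr_mem_disjSum] at hk
          exact (aux_mgf_term (hml n) (hgl n) (hu n hk)).1
      have hmgfk : ∀ k ∈ s.disjSum s,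
          mgf (f k) P t ≤ Real.exp (t^2 * (a (Sum.elim id id k))^2) := by
        intro k hk
        rcases k with n | n
        · rw [Finset.inl_mem_disjSum] at hk
          have h2 := (aux_mgf_term (hmh n) (hgh n) (hu n hk)).2
          rw [mul_pow, mul_pow, hε2, one_mul] at h2
          exact h2
        · rw [Finset.inr_mem_disjSum] at hk
          have h2 := (aux_mgf_term (hml n) (hgl n) (hu n hk)).2
          rw [mul_pow, mul_pow, hε2, one_mul] at h2
          exact h2
      have hFeq : (∑ k ∈ s.disjSum s, f k) = fun ω => ε * F ω := by
        funext ω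
        rw [Finset.sum_apply, Finset.sum_disjSum, hF_def]
        simp only []
        rw [Finset.mul_sum, ← Finset.sum_add_distrib]
        apply Finset.sum_congr rfl
        intro n _
        show (ε * a n) * ((h n ω)^2 - 1)/2 + (ε * a n) * ((l n ω)^2 - 1)/2
          = ε * (a n * ((h n ω ^ 2 + l n ω ^ 2) / 2 - 1))
        ring
      have hIntSum : Integrable (fun ω => Real.exp (t * (ε * F ω))) P := by
        have h0 := hf_indep.integrable_exp_mul_sum (t := t) hfm hint_k
        rw [hFeq] at h0
        exact h0
      have hmgf_le : mgf (fun ω => ε * F ω) P t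
          ≤ Real.exp (t^2 * (4/β) * (M:ℝ)^(1-2*α)) := by
        rw [← hFeq, hf_indep.mgf_sum hfm]
        calc ∏ k ∈ s.disjSum s, mgf (f k) P t
            ≤ ∏ k ∈ s.disjSum s, Real.exp (t^2 * (a (Sum.elim id id k))^2) :=
              Finset.prod_le_prod (fun k _ => mgf_nonneg) hmgfk
          _ = Real.exp (∑ k ∈ s.disjSum s, t^2 * (a (Sum.elim id id k))^2) :=
              (Real.exp_sum _ _).symm
          _ ≤ Real.exp (t^2 * (4/β) * (M:ℝ)^(1-2*α)) := by
              apply Real.exp_le_exp.mpr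
              rw [Finset.sum_disjSum]
              simp only [Sum.elim_inl, Sum.elim_inr, id_eq]
              have hsum : ∑ n ∈ s, t^2 * (a n)^2 = t^2 * ∑ n ∈ s, (a n)^2 := by
                rw [Finset.mul_sum]
              rw [hsum]
              have ht2 : (0:ℝ) ≤ t^2 := sq_nonneg t
              have h5 := mul_le_mul_of_nonneg_left hVbound ht2
              have h6 : t^2*(2/β*((M:ℝ)^(1-2*α)))*2 = t^2*(4/β)*(M:ℝ)^(1-2*α) := by
                ring
              linarith
      have hcher := measure_ge_le_exp_mul_mgf (μ := P) (X := fun ω => ε * F ω) lam ht0.le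
        hIntSum
      have htr : (P {ω | lam ≤ ε * F ω}).toReal
          ≤ Real.exp (-(t*lam) + t^2 * (4/β) * (M:ℝ)^(1-2*α)) := by
        refine hcher.trans ?_
        rw [Real.exp_add]
        have := Real.exp_pos (-t*lam)
        calc Real.exp (-t*lam) * mgf (fun ω => ε * F ω) P t
            ≤ Real.exp (-t*lam) * Real.exp (t^2 * (4/β) * (M:ℝ)^(1-2*α)) :=
              mul_le_mul_of_nonneg_left hmgf_le (Real.exp_pos _).le
          _ = Real.exp (-(t*lam)) * Real.exp (t^2 * (4/β) * (M:ℝ)^(1-2*α)) := by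
              rw [neg_mul]
      calc P {ω | lam ≤ ε * F ω}
          = ENNReal.ofReal ((P {ω | lam ≤ ε * F ω}).toReal) :=
            (ENNReal.ofReal_toReal (measure_ne_top P _)).symm
        _ ≤ ENNReal.ofReal (Real.exp (-(t*lam) + t^2 * (4/β) * (M:ℝ)^(1-2*α))) :=
            ENNReal.ofReal_le_ofReal htr
    have hsub : {ω | lam < |F ω|}
        ⊆ {ω | lam ≤ (1:ℝ) * F ω} ∪ {ω | lam ≤ (-1:ℝ) * F ω} := by
      intro ω hω
      simp only [Set.mem_setOf_eq, Set.mem_union, one_mul, neg_one_mul] at *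
      rcases abs_cases (F ω) with ⟨he, _⟩ | ⟨he, _⟩
      · left; rw [← he]; exact hω.le
      · right; rw [← he]; exact hω.le
    calc P {ω | lam < |F ω|}
        ≤ P ({ω | lam ≤ (1:ℝ) * F ω} ∪ {ω | lam ≤ (-1:ℝ) * F ω}) := measure_mono hsub
      _ ≤ P {ω | lam ≤ (1:ℝ) * F ω} + P {ω | lam ≤ (-1:ℝ) * F ω} := measure_union_le _ _
      _ ≤ ENNReal.ofReal (Real.exp (-(t*lam) + t^2 * (4/β) * (M:ℝ)^(1-2*α)))
          + ENNReal.ofReal (Real.exp (-(t*lam) + t^2 * (4/β) * (M:ℝ)^(1-2*α))) :=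
            add_le_add (chern 1 (Or.inl rfl)) (chern (-1) (Or.inr rfl))
      _ = ENNReal.ofReal (2 * Real.exp (-(t*lam) + t^2 * (4/β) * (M:ℝ)^(1-2*α))) := by
          rw [← ENNReal.ofReal_add (Real.exp_pos _).le (Real.exp_pos _).le]
          congr 1
          ring
  constructor
  · -- regime 1
    intro hreg
    have ht1 : (0:ℝ) < (M:ℝ)^α/2 := by linarith
    have hb := key ((M:ℝ)^α/2) ht1 (le_refl _)
    refine hb.trans ?_
    apply ENNReal.ofReal_le_ofReal
    have hMM : ((M:ℝ)^α/2)^2 * (4/β) * (M:ℝ)^(1-2*α) = (M:ℝ)/β := by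
      have : (M:ℝ)^α * (M:ℝ)^α * (M:ℝ)^(1-2*α) = (M:ℝ) := by
        rw [hmul, hmul, show α + α + (1-2*α) = 1 by ring, Real.rpow_one]
      field_simp
      nlinarith [this]
    have hlamM : 4/β * (M:ℝ) ≤ lam * (M:ℝ)^α := by
      have h1 : (4/β * (M:ℝ)^(1-α)) * (M:ℝ)^α ≤ lam * (M:ℝ)^α :=
        mul_le_mul_of_nonneg_right hreg hApos.le
      rwa [mul_assoc, hmul, show (1-α) + α = 1 by ring, Real.rpow_one] at h1
    have hexp : -((M:ℝ)^α/2*lam) + ((M:ℝ)^α/2)^2 * (4/β) * (M:ℝ)^(1-2*α)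
        ≤ -(β/16) * lam * (M:ℝ)^α := by
      rw [hMM]
      have hM4 : (M:ℝ)/β ≤ lam * (M:ℝ)^α / 4 := by
        rw [div_le_div_iff₀ hβ0 (by norm_num : (0:ℝ) < 4)]
        have h0 : (4/β * (M:ℝ)) * β ≤ (lam * (M:ℝ)^α) * β :=
          mul_le_mul_of_nonneg_right hlamM hβ0.le
        have e : (4/β * (M:ℝ)) * β = 4 * (M:ℝ) := by field_simp
        rw [e] at h0
        linarith
      have hge : 0 ≤ lam * (M:ℝ)^α := by positivity
      nlinarith [hβ1, hge, hβ0, mul_nonneg hlam.le hApos.le]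
    have := Real.exp_le_exp.mpr hexp
    linarith
  · -- regime 2
    intro hreg
    obtain ⟨t, ht_def⟩ : ∃ t : ℝ, t = lam * β * (M:ℝ)^(2*α-1)/8 := ⟨_, rfl⟩
    have hBpos : (0:ℝ) < (M:ℝ)^(2*α-1) := Real.rpow_pos_of_pos hMr _
    have ht0 : 0 < t := by rw [ht_def]; positivity
    have ht2 : t ≤ (M:ℝ)^α/2 := by
      rw [ht_def]
      have h1 : lam * β * (M:ℝ)^(2*α-1) ≤ (4/β * (M:ℝ)^(1-α)) * β * (M:ℝ)^(2*α-1) := by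
        have := mul_le_mul_of_nonneg_right (mul_le_mul_of_nonneg_right hreg hβ0.le) hBpos.le
        linarith
      have h2 : (4/β * (M:ℝ)^(1-α)) * β * (M:ℝ)^(2*α-1) = 4 * (M:ℝ)^α := by
        have : (M:ℝ)^(1-α) * (M:ℝ)^(2*α-1) = (M:ℝ)^α := by
          rw [hmul, show (1-α) + (2*α-1) = α by ring]
        field_simp
        nlinarith [this, show (M:ℝ)^(1-α) * (M:ℝ)^(α*2-1) = (M:ℝ)^α by rw [show α*2-1 = 2*α-1 by ring]; exact this]
      rw [h2] at h1
      nlinarith [h1]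
    have hb := key t ht0 ht2
    refine hb.trans ?_
    apply ENNReal.ofReal_le_ofReal
    have hexp : -(t*lam) + t^2 * (4/β) * (M:ℝ)^(1-2*α)
        = -(β/16) * lam^2 * (M:ℝ)^(2*α-1) := by
      have hBB : (M:ℝ)^(2*α-1) * (M:ℝ)^(2*α-1) * (M:ℝ)^(1-2*α) = (M:ℝ)^(2*α-1) := by
        rw [hmul, hmul, show (2*α-1) + (2*α-1) + (1-2*α) = 2*α-1 by ring]
      have e1 : t^2 * (4/β) * (M:ℝ)^(1-2*α)
          = lam^2 * β * ((M:ℝ)^(2*α-1) * (M:ℝ)^(2*α-1) * (M:ℝ)^(1-2*α)) / 16 := by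
        rw [ht_def]
        field_simp
        ring
      rw [e1, hBB, ht_def]
      ring
    rw [hexp]
end

section
/- Let 1 < α < 2. For all real numbers x, y with x·y ≥ 0 and (x,y) ≠ (0,0), one has | |x|^{α−1} − |y|^{α−1} | ≥ (α−1) · |x − y| · max(|x|,|y|)^{α−2}. -/
lemma key_rpow_concave (α : ℝ) (hα₁ : 1 < α) (hα₂ : α < 2) (a b : ℝ)
    (hb : 0 ≤ b) (hba : b ≤ a) (ha : 0 < a) :
    (α - 1) * (a - b) * a ^ (α - 2) ≤ a ^ (α - 1) - b ^ (α - 1) := by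
  set β := α - 1 with hβdef
  have hβ0 : 0 < β := by simp only [hβdef]; linarith
  have hβ1 : β < 1 := by simp only [hβdef]; linarith
  have h := Real.geom_mean_le_arith_mean2_weighted (w₁ := 1 - β) (w₂ := β)
    (p₁ := a ^ β) (p₂ := a ^ (β - 1) * b) (by linarith) hβ0.le
    (Real.rpow_nonneg ha.le β) (mul_nonneg (Real.rpow_nonneg ha.le _) hb) (by ring)
  have e1 : (a ^ β) ^ (1 - β) * (a ^ (β - 1) * b) ^ β = b ^ β := by
    rw [Real.mul_rpow (Real.rpow_nonneg ha.le _) hb, ← Real.rpow_mul ha.le,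
      ← Real.rpow_mul ha.le, ← mul_assoc, ← Real.rpow_add ha]
    have : β * (1 - β) + (β - 1) * β = 0 := by ring
    rw [this, Real.rpow_zero, one_mul]
  rw [e1] at h
  have e2 : a ^ β = a ^ (β - 1) * a := by
    rw [← Real.rpow_add_one ha.ne']; ring_nf
  have hα2 : α - 2 = β - 1 := by rw [hβdef]; ring
  rw [hα2]
  nlinarith [h, e2]

/-- Lower bound on differences of powers `|x|^(α-1) - |y|^(α-1)` for `x·y ≥ 0`. -/
theorem rpow_diff_lower_bound (α : ℝ) (hα₁ : 1 < α) (hα₂ : α < 2) (x y : ℝ)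
    (hxy : 0 ≤ x * y) (hne : (x, y) ≠ (0, 0)) :
    (α - 1) * |x - y| * (max |x| |y|) ^ (α - 2) ≤ |(|x| ^ (α - 1) - |y| ^ (α - 1))| := by
  have habs : |x - y| = |(|x| - |y|)| := by
    rcases mul_nonneg_iff.mp hxy with ⟨hx, hy⟩ | ⟨hx, hy⟩
    · rw [abs_of_nonneg hx, abs_of_nonneg hy]
    · rw [abs_of_nonpos hx, abs_of_nonpos hy, ← abs_neg]; ring_nf
  rcases le_total |y| |x| with hle | hle
  · have hx0 : 0 < |x| := by
      rcases lt_or_eq_of_le (abs_nonneg x) with h | h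
      · exact h
      · exfalso; apply hne
        have hy : y = 0 := abs_eq_zero.mp (le_antisymm (by rw [h]; exact hle) (abs_nonneg y))
        have hx : x = 0 := abs_eq_zero.mp h.symm
        simp [hx, hy]
    have key := key_rpow_concave α hα₁ hα₂ |x| |y| (abs_nonneg y) hle hx0
    rw [max_eq_left hle, habs, abs_of_nonneg (sub_nonneg.mpr hle)]
    exact key.trans (le_abs_self _)
  · have hy0 : 0 < |y| := by
      rcases lt_or_eq_of_le (abs_nonneg y) with h | h
      · exact h
      · exfalso; apply hne
        have hx : x = 0 := abs_eq_zero.mp (le_antisymm (by rw [h]; exact hle) (abs_nonneg x))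
        have hy : y = 0 := abs_eq_zero.mp h.symm
        simp [hx, hy]
    have key := key_rpow_concave α hα₁ hα₂ |y| |x| (abs_nonneg x) hle hy0
    rw [max_eq_right hle, habs, abs_sub_comm |x| |y|, abs_of_nonneg (sub_nonneg.mpr hle)]
    calc (α - 1) * (|y| - |x|) * |y| ^ (α - 2)
        ≤ |y| ^ (α - 1) - |x| ^ (α - 1) := key
      _ ≤ |(|y| ^ (α - 1) - |x| ^ (α - 1))| := le_abs_self _
      _ = |(|x| ^ (α - 1) - |y| ^ (α - 1))| := abs_sub_comm _ _
end
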